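/- arXiv:1902.09678 — 2 statements merged into one kernel-verified Lean document; each statement's English description precedes it below -/
import Mathlib

section
/- Fix integers d ≥ 2 and n ≥ 1. There exists a positive constant c_{d,n} > 0 such that for all 0 < δ < c_{d,n} the following holds: if the anisotropy parameters satisfy (1/2)δ^i ≤ λ_i^{(k)} ≤ 2δ^i for all 1 ≤ i ≤ n and 1 ≤ k ≤ d, then the PVBS Hamiltonian H_L is gapped, i.e. inf_{L ≥ 2} γ_L > 0. -/
open scoped BigOperators ComplexOrder Matrix

namespace PVBS

/-- The standard basis vector `|a ⊗ b⟩` of `ℂ^{n+1} ⊗ ℂ^{n+1}`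
(realized as functions on `Fin (n+1) × Fin (n+1)`). -/
def ketPair {n : ℕ} (a b : Fin (n + 1)) : Fin (n + 1) × Fin (n + 1) → ℂ :=
  fun p => if p = (a, b) then 1 else 0

/-- The orthogonal projection onto the span of the vector `v` (interpreted as `0` if `v = 0`). -/
noncomputable def projOnto {P : Type*} [Fintype P] (v : P → ℂ) : Matrix P P ℂ :=
  ((∑ p, Complex.normSq (v p) : ℝ) : ℂ)⁻¹ • Matrix.of fun a b => v a * (starRingEnd ℂ) (v b)

/-- The vector `φ_i = |0 ⊗ i⟩ − λ_i |i ⊗ 0⟩` (the species `1 ≤ i ≤ n` is encoded as `i : Fin n`,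
with corresponding basis element `i.succ : Fin (n+1)`). -/
def phiA {n : ℕ} (lam : ℝ) (i : Fin n) : Fin (n + 1) × Fin (n + 1) → ℂ :=
  fun p => ketPair 0 i.succ p - (lam : ℂ) * ketPair i.succ 0 p

/-- The vector `φ_{ij} = λ_i |i ⊗ j⟩ − λ_j |j ⊗ i⟩` for `i < j`. -/
def phiB {n : ℕ} (lami lamj : ℝ) (i j : Fin n) : Fin (n + 1) × Fin (n + 1) → ℂ :=
  fun p => (lami : ℂ) * ketPair i.succ j.succ p - (lamj : ℂ) * ketPair j.succ i.succ p

/-- The vector `φ_{ii} = |i ⊗ i⟩`. -/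
def phiC {n : ℕ} (i : Fin n) : Fin (n + 1) × Fin (n + 1) → ℂ := ketPair i.succ i.succ

/-- The local PVBS interaction `h^{(k)}` in a fixed direction `k`, built from the anisotropy
parameters `lam i = λ_{i+1}^{(k)}`: the sum of the orthogonal projections onto the normalized
versions of the vectors `φ_i` (for `1 ≤ i ≤ n`) and `φ_{ij}` (for `1 ≤ i ≤ j ≤ n`). -/
noncomputable def hloc {n : ℕ} (lam : Fin n → ℝ) :
    Matrix (Fin (n + 1) × Fin (n + 1)) (Fin (n + 1) × Fin (n + 1)) ℂ :=
  (∑ i, projOnto (phiA (lam i) i)) +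
    ∑ i, ∑ j,
      if i < j then projOnto (phiB (lam i) (lam j) i j)
      else if i = j then projOnto (phiC i) else 0

/-- The reference interaction `h̃ = Σ_{i=1}^n |0⊗i⟩⟨0⊗i| + Σ_{1≤i≤j≤n} |i⊗j⟩⟨i⊗j|`
(the `δ = 0` model). -/
noncomputable def htilde (n : ℕ) :
    Matrix (Fin (n + 1) × Fin (n + 1)) (Fin (n + 1) × Fin (n + 1)) ℂ :=
  (∑ i : Fin n, projOnto (ketPair 0 i.succ)) +
    ∑ i : Fin n, ∑ j : Fin n, if i ≤ j then projOnto (ketPair i.succ j.succ) else 0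

/-- The embedding of a two-site operator `h2` at the ordered pair of sites `(x, y)` of `V`,
acting as the identity on all other sites. -/
def embed {n : ℕ} {V : Type*} [Fintype V] [DecidableEq V] (x y : V)
    (h2 : Matrix (Fin (n + 1) × Fin (n + 1)) (Fin (n + 1) × Fin (n + 1)) ℂ) :
    Matrix (V → Fin (n + 1)) (V → Fin (n + 1)) ℂ :=
  Matrix.of fun σ τ =>
    if ∀ z, z ≠ x → z ≠ y → σ z = τ z then h2 (σ x, σ y) (τ x, τ y) else 0

/-- The spectral gap of a matrix: the smallest positive (real) element of its spectrum
(by convention `sInf ∅ = 0` if there is none). -/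
noncomputable def gap {I : Type*} [Fintype I] [DecidableEq I] (M : Matrix I I ℂ) : ℝ :=
  sInf {γ : ℝ | 0 < γ ∧ (γ : ℂ) ∈ spectrum ℂ M}

/-! ### The periodic box `Λ_L = (ZMod N)^d`, `N = 2L`. -/

/-- The neighbor `x + e_k` of the site `x` on the torus `(ZMod N)^d`. -/
def nbrT {d N : ℕ} (x : Fin d → ZMod N) (k : Fin d) : Fin d → ZMod N :=
  fun j => if j = k then x j + 1 else x j

/-- The interaction term `h_e = h^{(k)}_{x, x+e_k}` attached to the oriented edge
`e = (x, k)` of the torus. -/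
noncomputable def hedge {n d N : ℕ} [NeZero N] (lam : Fin n → Fin d → ℝ)
    (e : (Fin d → ZMod N) × Fin d) :
    Matrix ((Fin d → ZMod N) → Fin (n + 1)) ((Fin d → ZMod N) → Fin (n + 1)) ℂ :=
  embed e.1 (nbrT e.1 e.2) (hloc fun i => lam i e.2)

/-- The PVBS Hamiltonian `H_L = Σ_{x ∈ Λ_L} Σ_{k=1}^d h^{(k)}_{x,x+e_k}` on the periodic
box `Λ_L = (ZMod N)^d` with `N = 2L`. -/
noncomputable def HL (n d N : ℕ) [NeZero N] (lam : Fin n → Fin d → ℝ) :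
    Matrix ((Fin d → ZMod N) → Fin (n + 1)) ((Fin d → ZMod N) → Fin (n + 1)) ℂ :=
  ∑ e : (Fin d → ZMod N) × Fin d, hedge lam e

/-- The (unordered) endpoints of the oriented torus edge `e = (x, k)`. -/
def epT {d N : ℕ} (e : (Fin d → ZMod N) × Fin d) : Finset (Fin d → ZMod N) :=
  {e.1, nbrT e.1 e.2}

/-- `Q = Σ_{e ∼ e'} {h_e, h_{e'}}`: the sum over (unordered) pairs of torus edges sharing
exactly one vertex of the anticommutator `{h_e, h_{e'}}`, written as a sum of the products
`h_e * h_{e'}` over ordered pairs. -/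
noncomputable def QL (n d N : ℕ) [NeZero N] (lam : Fin n → Fin d → ℝ) :
    Matrix ((Fin d → ZMod N) → Fin (n + 1)) ((Fin d → ZMod N) → Fin (n + 1)) ℂ :=
  ∑ e : (Fin d → ZMod N) × Fin d, ∑ e' : (Fin d → ZMod N) × Fin d,
    if (epT e ∩ epT e').card = 1 then hedge lam e * hedge lam e' else 0

/-- `R = Σ_{e ≁ e'} {h_e, h_{e'}}`: the sum over (unordered) pairs of torus edges sharing
no vertex of the anticommutator `{h_e, h_{e'}}`, written as a sum of the products
`h_e * h_{e'}` over ordered pairs. -/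
noncomputable def RL (n d N : ℕ) [NeZero N] (lam : Fin n → Fin d → ℝ) :
    Matrix ((Fin d → ZMod N) → Fin (n + 1)) ((Fin d → ZMod N) → Fin (n + 1)) ℂ :=
  ∑ e : (Fin d → ZMod N) × Fin d, ∑ e' : (Fin d → ZMod N) × Fin d,
    if (epT e ∩ epT e').card = 0 then hedge lam e * hedge lam e' else 0

/-! ### Subgraphs of `ℤ^d` and the box on a stick `C_m`. -/

/-- The neighbor `x + e_k` of the site `x ∈ ℤ^d`. -/
def nbrZ {d : ℕ} (x : Fin d → ℤ) (k : Fin d) : Fin d → ℤ :=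
  fun j => if j = k then x j + 1 else x j

/-- The point `l·e_1 ∈ ℤ^d`. -/
def stickPt (d : ℕ) (l : ℕ) : Fin d → ℤ := fun k => if (k : ℕ) = 0 then (l : ℤ) else 0

/-- The stick `S = {0, e_1, …, (n−1)e_1} ⊂ ℤ^d`. -/
def stickF (d n : ℕ) : Finset (Fin d → ℤ) := (Finset.range n).image (stickPt d)

/-- The box `B_m = {Σ a_k e_k : n ≤ a_1 ≤ m+n, 0 ≤ a_k ≤ m for k ≥ 2} ⊂ ℤ^d`. -/
def boxF (d n m : ℕ) : Finset (Fin d → ℤ) :=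
  Finset.image
    (fun a : Fin d → Fin (m + 1) => fun k : Fin d =>
      if (k : ℕ) = 0 then (n : ℤ) + (a k : ℤ) else (a k : ℤ))
    Finset.univ

/-- The box on a stick `C_m = S ∪ B_m ⊂ ℤ^d`. -/
def CmF (d n m : ℕ) : Finset (Fin d → ℤ) := stickF d n ∪ boxF d n m

/-- The PVBS subsystem Hamiltonian `H_G = Σ_{e ∈ E_G} h_e` of a finite subgraph
`G ⊂ ℤ^d` (with one interaction term for every oriented lattice edge with both endpoints
in `G`), acting on `⊗_{x ∈ G} ℂ^{n+1}`. -/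
noncomputable def HG {d : ℕ} (n : ℕ) (lam : Fin n → Fin d → ℝ) (G : Finset (Fin d → ℤ)) :
    Matrix ({x // x ∈ G} → Fin (n + 1)) ({x // x ∈ G} → Fin (n + 1)) ℂ :=
  ∑ x : {x // x ∈ G}, ∑ k : Fin d,
    if h : nbrZ (x : Fin d → ℤ) k ∈ G then
      embed x ⟨nbrZ (x : Fin d → ℤ) k, h⟩ (hloc fun i => lam i k)
    else 0

/-- The PVBS Hamiltonian `H_{C_m}` of the box on a stick. -/
noncomputable def HCm (d n m : ℕ) (lam : Fin n → Fin d → ℝ) :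
    Matrix ({x // x ∈ CmF d n m} → Fin (n + 1)) ({x // x ∈ CmF d n m} → Fin (n + 1)) ℂ :=
  HG n lam (CmF d n m)

/-- The reference (`δ = 0`) Hamiltonian `H̃_G = Σ_{e ∈ E_G} h̃_e` of a finite subgraph
`G ⊂ ℤ^d`. -/
noncomputable def HtildeG {d : ℕ} (n : ℕ) (G : Finset (Fin d → ℤ)) :
    Matrix ({x // x ∈ G} → Fin (n + 1)) ({x // x ∈ G} → Fin (n + 1)) ℂ :=
  ∑ x : {x // x ∈ G}, ∑ k : Fin d,
    if h : nbrZ (x : Fin d → ℤ) k ∈ G then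
      embed x ⟨nbrZ (x : Fin d → ℤ) k, h⟩ (htilde n)
    else 0

/-! ### Translates `x + C_m` inside the torus. -/

/-- The interaction term of the lattice edge `(c, c + e_k)` of `ℤ^d`, translated by
`x` into the torus `(ZMod N)^d` (reducing coordinates mod `N`). -/
noncomputable def hedgeTrans {n d N : ℕ} [NeZero N] (lam : Fin n → Fin d → ℝ)
    (x : Fin d → ZMod N) (c : Fin d → ℤ) (k : Fin d) :
    Matrix ((Fin d → ZMod N) → Fin (n + 1)) ((Fin d → ZMod N) → Fin (n + 1)) ℂ :=
  embed (fun j => x j + (c j : ZMod N)) (fun j => x j + ((nbrZ c k) j : ZMod N))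
    (hloc fun i => lam i k)

/-- The subsystem Hamiltonian `H_{x+C_m}` of the translate `x + C_m ⊂ Λ_L`, acting on the
full torus Hilbert space. -/
noncomputable def HtransCm (n d N m : ℕ) [NeZero N] (lam : Fin n → Fin d → ℝ)
    (x : Fin d → ZMod N) :
    Matrix ((Fin d → ZMod N) → Fin (n + 1)) ((Fin d → ZMod N) → Fin (n + 1)) ℂ :=
  ∑ c : {y // y ∈ CmF d n m}, ∑ k : Fin d,
    if nbrZ (c : Fin d → ℤ) k ∈ CmF d n m then hedgeTrans lam x (c : Fin d → ℤ) k else 0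

/-- The (unordered) endpoints of the oriented lattice edge `(c, c + e_k)` of `ℤ^d`. -/
def epZ {d : ℕ} (c : Fin d → ℤ) (k : Fin d) : Finset (Fin d → ℤ) := {c, nbrZ c k}

/-- `Q_{x+C_m}`: the sum of the anticommutators `{h_e, h_{e'}}` over (unordered) pairs of
edges of `x + C_m` sharing exactly one vertex, written as a sum of products over ordered
pairs. -/
noncomputable def QtransCm (n d N m : ℕ) [NeZero N] (lam : Fin n → Fin d → ℝ)
    (x : Fin d → ZMod N) :
    Matrix ((Fin d → ZMod N) → Fin (n + 1)) ((Fin d → ZMod N) → Fin (n + 1)) ℂ :=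
  ∑ c : {y // y ∈ CmF d n m}, ∑ k : Fin d,
    ∑ c' : {y // y ∈ CmF d n m}, ∑ k' : Fin d,
      if nbrZ (c : Fin d → ℤ) k ∈ CmF d n m ∧ nbrZ (c' : Fin d → ℤ) k' ∈ CmF d n m ∧
          (epZ (c : Fin d → ℤ) k ∩ epZ (c' : Fin d → ℤ) k').card = 1 then
        hedgeTrans lam x (c : Fin d → ℤ) k * hedgeTrans lam x (c' : Fin d → ℤ) k'
      else 0

/-- `R_{x+C_m}`: the sum of the anticommutators `{h_e, h_{e'}}` over (unordered) pairs of
vertex-disjoint edges of `x + C_m`, written as a sum of products over ordered pairs. -/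
noncomputable def RtransCm (n d N m : ℕ) [NeZero N] (lam : Fin n → Fin d → ℝ)
    (x : Fin d → ZMod N) :
    Matrix ((Fin d → ZMod N) → Fin (n + 1)) ((Fin d → ZMod N) → Fin (n + 1)) ℂ :=
  ∑ c : {y // y ∈ CmF d n m}, ∑ k : Fin d,
    ∑ c' : {y // y ∈ CmF d n m}, ∑ k' : Fin d,
      if nbrZ (c : Fin d → ℤ) k ∈ CmF d n m ∧ nbrZ (c' : Fin d → ℤ) k' ∈ CmF d n m ∧
          (epZ (c : Fin d → ℤ) k ∩ epZ (c' : Fin d → ℤ) k').card = 0 then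
        hedgeTrans lam x (c : Fin d → ℤ) k * hedgeTrans lam x (c' : Fin d → ℤ) k'
      else 0

/-- The particle number operator `N_i` of species `1 ≤ i ≤ n` on `⊗_{x ∈ G} ℂ^{n+1}`:
diagonal in the product basis, counting the sites carrying the label `i`. -/
noncomputable def Nop {d : ℕ} {n : ℕ} (G : Finset (Fin d → ℤ)) (i : Fin n) :
    Matrix ({x // x ∈ G} → Fin (n + 1)) ({x // x ∈ G} → Fin (n + 1)) ℂ :=
  Matrix.diagonal fun σ => ((Finset.univ.filter fun x => σ x = i.succ).card : ℂ)

/-- The product basis vector of `⊗_{x} ℂ^{n+1}` labelled by the configuration `σ`. -/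
def bvec {I : Type*} [DecidableEq I] (σ : I) : I → ℂ := fun τ => if τ = σ then 1 else 0



def tvec {P : Type*} [DecidableEq P] (s t : ℝ) (u w : P) : P → ℂ :=
  fun p => (s : ℂ) * (if p = u then 1 else 0) + (t : ℂ) * (if p = w then 1 else 0)

/-- real coefficient function -/
def tcf {P : Type*} [DecidableEq P] (s t : ℝ) (u w : P) : P → ℝ :=
  fun p => (if p = u then s else 0) + (if p = w then t else 0)

lemma tvec_eq {P : Type*} [DecidableEq P] (s t : ℝ) (u w : P) (p : P) :
    tvec s t u w p = ((tcf s t u w p : ℝ) : ℂ) := by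
  simp only [tvec, tcf, apply_ite Complex.ofReal, Complex.ofReal_add, Complex.ofReal_zero]
  by_cases h1 : p = u <;> by_cases h2 : p = w <;> simp [h1, h2]

lemma tvec_normSq {P : Type*} [Fintype P] [DecidableEq P] {u w : P} (huw : u ≠ w) (s t : ℝ) :
    ∑ p, Complex.normSq (tvec s t u w p) = s ^ 2 + t ^ 2 := by
  have h : ∀ p, Complex.normSq (tvec s t u w p)
      = (if p = u then s ^ 2 else 0) + (if p = w then t ^ 2 else 0) := by
    intro p
    rw [tvec_eq, Complex.normSq_ofReal, tcf]
    by_cases h1 : p = u <;> by_cases h2 : p = w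
    · exact absurd (h1 ▸ h2) huw
    · simp [h1, h2, huw] <;> try ring
    · simp [h1, h2, (Ne.symm huw : w ≠ u)] <;> try ring
    · simp [h1, h2] <;> try ring
  rw [Finset.sum_congr rfl fun p _ => h p, Finset.sum_add_distrib]
  simp

lemma projOnto_tvec {P : Type*} [Fintype P] [DecidableEq P] {u w : P} (huw : u ≠ w)
    (s t : ℝ) (p q : P) :
    projOnto (tvec s t u w) p q
      = (((s ^ 2 + t ^ 2)⁻¹ * (tcf s t u w p * tcf s t u w q) : ℝ) : ℂ) := by
  rw [projOnto, Matrix.smul_apply, tvec_normSq huw]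
  simp only [Matrix.of_apply, tvec_eq, Complex.conj_ofReal, smul_eq_mul]
  push_cast
  ring

/-! ### entries of the local interaction -/

lemma phiA_tvec {n : ℕ} (lam : ℝ) (i : Fin n) :
    phiA lam i = tvec 1 (-lam) ((0 : Fin (n + 1)), i.succ) (i.succ, (0 : Fin (n + 1))) := by
  funext p
  simp only [phiA, tvec, ketPair]
  push_cast
  ring

lemma phiB_tvec {n : ℕ} (li lj : ℝ) (i j : Fin n) :
    phiB li lj i j = tvec li (-lj) (i.succ, j.succ) (j.succ, i.succ) := by
  funext p
  simp only [phiB, tvec, ketPair]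
  push_cast
  ring

lemma pairA_ne {n : ℕ} (i : Fin n) :
    ((0 : Fin (n + 1)), i.succ) ≠ (i.succ, (0 : Fin (n + 1))) := by
  simp [Prod.ext_iff, (Fin.succ_ne_zero i).symm]

lemma pairB_ne {n : ℕ} {i j : Fin n} (h : i ≠ j) :
    ((i.succ : Fin (n+1)), j.succ) ≠ (j.succ, i.succ) := by
  simp [Prod.ext_iff, Fin.succ_inj, h]

lemma projA_apply {n : ℕ} (lam : ℝ) (i : Fin n) (p q : Fin (n + 1) × Fin (n + 1)) :
    projOnto (phiA lam i) p q
      = (((1 + lam ^ 2)⁻¹ *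
          (tcf 1 (-lam) ((0 : Fin (n + 1)), i.succ) (i.succ, (0 : Fin (n + 1))) p *
           tcf 1 (-lam) ((0 : Fin (n + 1)), i.succ) (i.succ, (0 : Fin (n + 1))) q) : ℝ) : ℂ) := by
  rw [phiA_tvec, projOnto_tvec (pairA_ne i)]
  norm_num

lemma projB_apply {n : ℕ} (li lj : ℝ) {i j : Fin n} (h : i ≠ j) (p q : Fin (n + 1) × Fin (n + 1)) :
    projOnto (phiB li lj i j) p q
      = (((li ^ 2 + lj ^ 2)⁻¹ *
          (tcf li (-lj) (i.succ, j.succ) (j.succ, i.succ) p *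
           tcf li (-lj) (i.succ, j.succ) (j.succ, i.succ) q) : ℝ) : ℂ) := by
  rw [phiB_tvec, projOnto_tvec (pairB_ne h)]
  norm_num

lemma projC_apply {n : ℕ} (i : Fin n) (p q : Fin (n + 1) × Fin (n + 1)) :
    projOnto (phiC i) p q = if p = (i.succ, i.succ) ∧ q = (i.succ, i.succ) then 1 else 0 := by
  have hn : ∑ p, Complex.normSq (phiC i p) = 1 := by
    simp only [phiC, ketPair]
    have h : ∀ p : Fin (n+1) × Fin (n+1),
        Complex.normSq (if p = (i.succ, i.succ) then (1:ℂ) else 0)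
          = if p = (i.succ, i.succ) then 1 else 0 := by
      intro p; split_ifs <;> simp
    rw [Finset.sum_congr rfl fun p _ => h p]
    simp
  rw [projOnto, Matrix.smul_apply, hn]
  simp only [phiC, ketPair, Matrix.of_apply]
  by_cases h1 : p = (i.succ, i.succ) <;> by_cases h2 : q = (i.succ, i.succ) <;>
    simp [h1, h2]

lemma projA_row_ne {n : ℕ} (lam : ℝ) (i : Fin n) (p q : Fin (n + 1) × Fin (n + 1))
    (h1 : p ≠ ((0 : Fin (n + 1)), i.succ)) (h2 : p ≠ (i.succ, (0 : Fin (n + 1)))) :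
    projOnto (phiA lam i) p q = 0 := by
  rw [projA_apply]
  simp [tcf, h1, h2]

lemma projB_row_ne {n : ℕ} (li lj : ℝ) {i j : Fin n} (h : i ≠ j) (p q : Fin (n + 1) × Fin (n + 1))
    (h1 : p ≠ (i.succ, j.succ)) (h2 : p ≠ (j.succ, i.succ)) :
    projOnto (phiB li lj i j) p q = 0 := by
  rw [projB_apply li lj h]
  simp [tcf, h1, h2]

/-! ### the coefficient functions -/

noncomputable def nu {n : ℕ} (ℓ : Fin n → ℝ) : Fin (n + 1) → ℝ := fun a => Fin.cases 1 ℓ a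

@[simp] lemma nu_zero {n : ℕ} (ℓ : Fin n → ℝ) : nu ℓ 0 = 1 := rfl

@[simp] lemma nu_succ {n : ℕ} (ℓ : Fin n → ℝ) (i : Fin n) : nu ℓ i.succ = ℓ i := by
  simp [nu]

noncomputable def wd {n : ℕ} (ν : Fin (n + 1) → ℝ) (a b : Fin (n + 1)) : ℝ :=
  if a = b then (if a = 0 then 0 else 1) else ν a ^ 2 / (ν a ^ 2 + ν b ^ 2)

noncomputable def wo {n : ℕ} (ν : Fin (n + 1) → ℝ) (a b : Fin (n + 1)) : ℝ :=
  if a = b then 0 else ν a * ν b / (ν a ^ 2 + ν b ^ 2)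

/-! ### row sums of the A–part -/

lemma sumA_00 {n : ℕ} (ℓ : Fin n → ℝ) (q : Fin (n + 1) × Fin (n + 1)) :
    (∑ i, projOnto (phiA (ℓ i) i)) ((0 : Fin (n + 1)), (0 : Fin (n + 1))) q = 0 := by
  rw [Matrix.sum_apply]
  refine Finset.sum_eq_zero fun i _ => projA_row_ne _ _ _ _ ?_ ?_ <;>
    simp [Prod.ext_iff, (Fin.succ_ne_zero i).symm]

lemma sumA_0s {n : ℕ} (ℓ : Fin n → ℝ) (j0 : Fin n) (q : Fin (n + 1) × Fin (n + 1)) :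
    (∑ i, projOnto (phiA (ℓ i) i)) ((0 : Fin (n + 1)), j0.succ) q
      = projOnto (phiA (ℓ j0) j0) ((0 : Fin (n + 1)), j0.succ) q := by
  rw [Matrix.sum_apply]
  refine Finset.sum_eq_single_of_mem j0 (Finset.mem_univ _) fun i _ hij => ?_
  refine projA_row_ne _ _ _ _ ?_ ?_
  · simp [Prod.ext_iff, Fin.succ_inj, Ne.symm hij]
  · simp [Prod.ext_iff, (Fin.succ_ne_zero i).symm]

lemma sumA_s0 {n : ℕ} (ℓ : Fin n → ℝ) (i0 : Fin n) (q : Fin (n + 1) × Fin (n + 1)) :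
    (∑ i, projOnto (phiA (ℓ i) i)) (i0.succ, (0 : Fin (n + 1))) q
      = projOnto (phiA (ℓ i0) i0) (i0.succ, (0 : Fin (n + 1))) q := by
  rw [Matrix.sum_apply]
  refine Finset.sum_eq_single_of_mem i0 (Finset.mem_univ _) fun i _ hij => ?_
  refine projA_row_ne _ _ _ _ ?_ ?_
  · simp [Prod.ext_iff, Fin.succ_ne_zero i0]
  · simp [Prod.ext_iff, Fin.succ_inj, Ne.symm hij]

lemma sumA_ss {n : ℕ} (ℓ : Fin n → ℝ) (i0 j0 : Fin n) (q : Fin (n + 1) × Fin (n + 1)) :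
    (∑ i, projOnto (phiA (ℓ i) i)) (i0.succ, j0.succ) q = 0 := by
  rw [Matrix.sum_apply]
  refine Finset.sum_eq_zero fun i _ => projA_row_ne _ _ _ _ ?_ ?_ <;>
    simp [Prod.ext_iff, Fin.succ_ne_zero, (Fin.succ_ne_zero j0).symm]

/-! ### row sums of the B–part -/

lemma branch_row_ne {n : ℕ} (ℓ : Fin n → ℝ) (i j : Fin n) (p q : Fin (n + 1) × Fin (n + 1))
    (h1 : i < j → p ≠ (i.succ, j.succ)) (h2 : i < j → p ≠ (j.succ, i.succ))
    (h3 : i = j → p ≠ (i.succ, i.succ)) :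
    (if i < j then projOnto (phiB (ℓ i) (ℓ j) i j)
      else if i = j then projOnto (phiC i) else 0) p q = 0 := by
  split_ifs with hlt heq
  · exact projB_row_ne _ _ (ne_of_lt hlt) _ _ (h1 hlt) (h2 hlt)
  · subst heq; rw [projC_apply]; simp [h3 rfl]
  · simp

lemma fin_pair_ne {n : ℕ} {a b c d : Fin n} (h : (a:ℕ) ≠ c ∨ (b:ℕ) ≠ d) :
    ((a.succ : Fin (n+1)), b.succ) ≠ (c.succ, d.succ) := by
  simp only [ne_eq, Prod.mk.injEq, not_and, Fin.succ_inj]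
  intro h1 h2
  rcases h with h | h
  · exact h (by rw [h1])
  · exact h (by rw [h2])

lemma sumB_zero {n : ℕ} (ℓ : Fin n → ℝ) (p q : Fin (n + 1) × Fin (n + 1))
    (h : p.1 = 0 ∨ p.2 = 0) :
    (∑ i, ∑ j, if i < j then projOnto (phiB (ℓ i) (ℓ j) i j)
      else if i = j then projOnto (phiC i) else 0) p q = 0 := by
  rw [Matrix.sum_apply]
  refine Finset.sum_eq_zero fun i _ => ?_
  rw [Matrix.sum_apply]
  refine Finset.sum_eq_zero fun j _ => branch_row_ne _ _ _ _ _ ?_ ?_ ?_ <;>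
    · intro _ hp
      rcases h with h | h <;> rw [hp] at h <;>
        exact (Fin.succ_ne_zero _) h

lemma sumB_lt {n : ℕ} (ℓ : Fin n → ℝ) {i0 j0 : Fin n} (hij : i0 < j0)
    (q : Fin (n + 1) × Fin (n + 1)) :
    (∑ i, ∑ j, if i < j then projOnto (phiB (ℓ i) (ℓ j) i j)
      else if i = j then projOnto (phiC i) else 0) (i0.succ, j0.succ) q
      = projOnto (phiB (ℓ i0) (ℓ j0) i0 j0) (i0.succ, j0.succ) q := by
  rw [Matrix.sum_apply]
  have hij' : (i0 : ℕ) < (j0 : ℕ) := hij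
  have step : ∀ i, (∑ j, if i < j then projOnto (phiB (ℓ i) (ℓ j) i j)
      else if i = j then projOnto (phiC i) else 0) (i0.succ, j0.succ) q
      = if i = i0 then projOnto (phiB (ℓ i0) (ℓ j0) i0 j0) (i0.succ, j0.succ) q else 0 := by
    intro i
    rw [Matrix.sum_apply]
    by_cases hi : i = i0
    · subst hi
      rw [if_pos rfl]
      refine Finset.sum_eq_single_of_mem j0 (Finset.mem_univ _) (fun j _ hj => ?_) |>.trans ?_
      · have hj' : (j : ℕ) ≠ (j0 : ℕ) := fun h => hj (Fin.ext h)
        refine branch_row_ne _ _ _ _ _ ?_ ?_ ?_ <;>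
          · intro h
            have h' : (i : ℕ) < (j : ℕ) ∨ (i : ℕ) = (j : ℕ) := by
              first
                | exact Or.inl h
                | exact Or.inr (congrArg Fin.val h)
            exact fin_pair_ne (by rcases h' with h' | h' <;> omega)
      · rw [if_pos hij]
    · rw [if_neg hi]
      have hi' : (i : ℕ) ≠ (i0 : ℕ) := fun h => hi (Fin.ext h)
      refine Finset.sum_eq_zero fun j _ => branch_row_ne _ _ _ _ _ ?_ ?_ ?_ <;>
        · intro h
          have h' : (i : ℕ) < (j : ℕ) ∨ (i : ℕ) = (j : ℕ) := by
            first
              | exact Or.inl h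
              | exact Or.inr (congrArg Fin.val h)
          exact fin_pair_ne (by rcases h' with h' | h' <;> omega)
  rw [Finset.sum_congr rfl fun i _ => step i]
  simp

lemma sumB_gt {n : ℕ} (ℓ : Fin n → ℝ) {i0 j0 : Fin n} (hij : j0 < i0)
    (q : Fin (n + 1) × Fin (n + 1)) :
    (∑ i, ∑ j, if i < j then projOnto (phiB (ℓ i) (ℓ j) i j)
      else if i = j then projOnto (phiC i) else 0) (i0.succ, j0.succ) q
      = projOnto (phiB (ℓ j0) (ℓ i0) j0 i0) (i0.succ, j0.succ) q := by
  rw [Matrix.sum_apply]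
  have hij' : (j0 : ℕ) < (i0 : ℕ) := hij
  have step : ∀ i, (∑ j, if i < j then projOnto (phiB (ℓ i) (ℓ j) i j)
      else if i = j then projOnto (phiC i) else 0) (i0.succ, j0.succ) q
      = if i = j0 then projOnto (phiB (ℓ j0) (ℓ i0) j0 i0) (i0.succ, j0.succ) q else 0 := by
    intro i
    rw [Matrix.sum_apply]
    by_cases hi : i = j0
    · subst hi
      rw [if_pos rfl]
      refine Finset.sum_eq_single_of_mem i0 (Finset.mem_univ _) (fun j _ hj => ?_) |>.trans ?_
      · have hj' : (j : ℕ) ≠ (i0 : ℕ) := fun h => hj (Fin.ext h)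
        refine branch_row_ne _ _ _ _ _ ?_ ?_ ?_ <;>
          · intro h
            have h' : (i : ℕ) < (j : ℕ) ∨ (i : ℕ) = (j : ℕ) := by
              first
                | exact Or.inl h
                | exact Or.inr (congrArg Fin.val h)
            exact fin_pair_ne (by rcases h' with h' | h' <;> omega)
      · rw [if_pos hij]
    · rw [if_neg hi]
      have hi' : (i : ℕ) ≠ (j0 : ℕ) := fun h => hi (Fin.ext h)
      refine Finset.sum_eq_zero fun j _ => branch_row_ne _ _ _ _ _ ?_ ?_ ?_ <;>
        · intro h
          have h' : (i : ℕ) < (j : ℕ) ∨ (i : ℕ) = (j : ℕ) := by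
            first
              | exact Or.inl h
              | exact Or.inr (congrArg Fin.val h)
          exact fin_pair_ne (by rcases h' with h' | h' <;> omega)
  rw [Finset.sum_congr rfl fun i _ => step i]
  simp

lemma sumB_diag {n : ℕ} (ℓ : Fin n → ℝ) (i0 : Fin n) (q : Fin (n + 1) × Fin (n + 1)) :
    (∑ i, ∑ j, if i < j then projOnto (phiB (ℓ i) (ℓ j) i j)
      else if i = j then projOnto (phiC i) else 0) (i0.succ, i0.succ) q
      = projOnto (phiC i0) (i0.succ, i0.succ) q := by
  rw [Matrix.sum_apply]
  have step : ∀ i, (∑ j, if i < j then projOnto (phiB (ℓ i) (ℓ j) i j)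
      else if i = j then projOnto (phiC i) else 0) (i0.succ, i0.succ) q
      = if i = i0 then projOnto (phiC i0) (i0.succ, i0.succ) q else 0 := by
    intro i
    rw [Matrix.sum_apply]
    by_cases hi : i = i0
    · subst hi
      rw [if_pos rfl]
      refine Finset.sum_eq_single_of_mem i (Finset.mem_univ _) (fun j _ hj => ?_) |>.trans ?_
      · have hj' : (j : ℕ) ≠ (i : ℕ) := fun h => hj (Fin.ext h)
        refine branch_row_ne _ _ _ _ _ ?_ ?_ ?_ <;>
          · intro h
            have h' : (i : ℕ) < (j : ℕ) ∨ (i : ℕ) = (j : ℕ) := by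
              first
                | exact Or.inl h
                | exact Or.inr (congrArg Fin.val h)
            exact fin_pair_ne (by rcases h' with h' | h' <;> omega)
      · simp
    · rw [if_neg hi]
      have hi' : (i : ℕ) ≠ (i0 : ℕ) := fun h => hi (Fin.ext h)
      refine Finset.sum_eq_zero fun j _ => branch_row_ne _ _ _ _ _ ?_ ?_ ?_ <;>
        · intro h
          have h' : (i : ℕ) < (j : ℕ) ∨ (i : ℕ) = (j : ℕ) := by
            first
              | exact Or.inl h
              | exact Or.inr (congrArg Fin.val h)
          exact fin_pair_ne (by rcases h' with h' | h' <;> omega)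
  rw [Finset.sum_congr rfl fun i _ => step i]
  simp

lemma hloc_add_apply {n : ℕ} (ℓ : Fin n → ℝ) (p q : Fin (n + 1) × Fin (n + 1)) :
    hloc ℓ p q = (∑ i, projOnto (phiA (ℓ i) i)) p q +
      (∑ i, ∑ j, if i < j then projOnto (phiB (ℓ i) (ℓ j) i j)
        else if i = j then projOnto (phiC i) else 0) p q := by
  rw [hloc, Matrix.add_apply]

/-- The master entry formula for the local interaction. -/
lemma hloc_apply {n : ℕ} (ℓ : Fin n → ℝ) (a b : Fin (n + 1)) (q : Fin (n + 1) × Fin (n + 1)) :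
    hloc ℓ (a, b) q =
      if q = (a, b) then ((wd (nu ℓ) a b : ℝ) : ℂ)
      else if q = (b, a) ∧ a ≠ b then ((-(wo (nu ℓ) a b) : ℝ) : ℂ)
      else 0 := by
  rcases Fin.eq_zero_or_eq_succ a with rfl | ⟨i0, rfl⟩ <;>
    rcases Fin.eq_zero_or_eq_succ b with rfl | ⟨j0, rfl⟩
  · -- (0,0)
    rw [hloc_add_apply, sumA_00, sumB_zero ℓ _ _ (Or.inl rfl)]
    simp only [wd, wo, if_pos rfl]
    split_ifs <;> simp
  · -- (0, j0.succ)
    rw [hloc_add_apply, sumA_0s, sumB_zero ℓ _ _ (Or.inl rfl), add_zero, projA_apply]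
    have hab : (0 : Fin (n + 1)) ≠ j0.succ := (Fin.succ_ne_zero j0).symm
    have h1 : tcf 1 (-ℓ j0) ((0 : Fin (n+1)), j0.succ) (j0.succ, (0 : Fin (n+1)))
        ((0 : Fin (n+1)), j0.succ) = 1 := by
      simp [tcf, Prod.ext_iff, Fin.succ_ne_zero j0]
    rw [h1]
    by_cases hq1 : q = ((0 : Fin (n+1)), j0.succ)
    · subst hq1
      rw [h1, if_pos rfl]
      simp [wd, hab]
    · by_cases hq2 : q = (j0.succ, (0 : Fin (n+1)))
      · subst hq2
        have h2 : tcf 1 (-ℓ j0) ((0 : Fin (n+1)), j0.succ) (j0.succ, (0 : Fin (n+1)))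
            (j0.succ, (0 : Fin (n+1))) = -ℓ j0 := by
          simp [tcf, Prod.ext_iff, (Fin.succ_ne_zero j0)]
        rw [h2, if_neg (by simp [Prod.ext_iff, Fin.succ_ne_zero j0]),
          if_pos ⟨rfl, hab⟩]
        simp only [wo, if_neg hab, nu_zero, nu_succ]
        push_cast
        ring_nf
      · have h2 : tcf 1 (-ℓ j0) ((0 : Fin (n+1)), j0.succ) (j0.succ, (0 : Fin (n+1))) q = 0 := by
          simp [tcf, hq1, hq2]
        rw [h2, if_neg hq1, if_neg (fun hc => hq2 hc.1)]
        simp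
  · -- (i0.succ, 0)
    rw [hloc_add_apply, sumA_s0, sumB_zero ℓ _ _ (Or.inr rfl), add_zero, projA_apply]
    have hab : i0.succ ≠ (0 : Fin (n + 1)) := Fin.succ_ne_zero i0
    have h1 : tcf 1 (-ℓ i0) ((0 : Fin (n+1)), i0.succ) (i0.succ, (0 : Fin (n+1)))
        (i0.succ, (0 : Fin (n+1))) = -ℓ i0 := by
      simp [tcf, Prod.ext_iff, Fin.succ_ne_zero i0]
    rw [h1]
    by_cases hq1 : q = (i0.succ, (0 : Fin (n+1)))
    · subst hq1
      rw [h1, if_pos rfl]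
      simp only [wd, if_neg hab, nu_zero, nu_succ]
      push_cast
      ring_nf
    · by_cases hq2 : q = ((0 : Fin (n+1)), i0.succ)
      · subst hq2
        have h2 : tcf 1 (-ℓ i0) ((0 : Fin (n+1)), i0.succ) (i0.succ, (0 : Fin (n+1)))
            ((0 : Fin (n+1)), i0.succ) = 1 := by
          simp [tcf, Prod.ext_iff, Fin.succ_ne_zero i0]
        rw [h2, if_neg (by simp [Prod.ext_iff, Fin.succ_ne_zero i0]),
          if_pos ⟨rfl, hab⟩]
        simp only [wo, if_neg hab, nu_zero, nu_succ]
        push_cast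
        ring_nf
      · have h2 : tcf 1 (-ℓ i0) ((0 : Fin (n+1)), i0.succ) (i0.succ, (0 : Fin (n+1))) q = 0 := by
          simp [tcf, hq2, hq1]
        rw [h2, if_neg hq1, if_neg (fun hc => hq2 hc.1)]
        simp
  · -- (i0.succ, j0.succ)
    rcases lt_trichotomy i0 j0 with hlt | rfl | hgt
    · have hab : (i0.succ : Fin (n+1)) ≠ j0.succ := by
        simp [Fin.succ_inj]; exact ne_of_lt hlt
      rw [hloc_add_apply, sumA_ss, zero_add, sumB_lt ℓ hlt, projB_apply _ _ (ne_of_lt hlt)]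
      have h1 : tcf (ℓ i0) (-ℓ j0) (i0.succ, j0.succ) (j0.succ, i0.succ)
          (i0.succ, j0.succ) = ℓ i0 := by
        simp [tcf, Prod.ext_iff, Fin.succ_inj, ne_of_lt hlt]
      rw [h1]
      by_cases hq1 : q = (i0.succ, j0.succ)
      · subst hq1
        rw [h1, if_pos rfl]
        simp only [wd, if_neg hab, nu_succ]
        push_cast
        ring_nf
      · by_cases hq2 : q = (j0.succ, i0.succ)
        · subst hq2
          have h2 : tcf (ℓ i0) (-ℓ j0) (i0.succ, j0.succ) (j0.succ, i0.succ)
              (j0.succ, i0.succ) = -ℓ j0 := by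
            simp [tcf, Prod.ext_iff, Fin.succ_inj, (ne_of_lt hlt).symm, ne_of_lt hlt]
          rw [h2, if_neg (fin_pair_ne (Or.inl (by
              exact fun hc => (ne_of_lt hlt) (Fin.ext hc).symm))),
            if_pos ⟨rfl, hab⟩]
          simp only [wo, if_neg hab, nu_succ]
          push_cast
          ring_nf
        · have h2 : tcf (ℓ i0) (-ℓ j0) (i0.succ, j0.succ) (j0.succ, i0.succ) q = 0 := by
            simp [tcf, hq1, hq2]
          rw [h2, if_neg hq1, if_neg (fun hc => hq2 hc.1)]
          simp
    · -- diagonal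
      rw [hloc_add_apply, sumA_ss, zero_add, sumB_diag, projC_apply]
      by_cases hq1 : q = (i0.succ, i0.succ)
      · subst hq1
        rw [if_pos ⟨rfl, rfl⟩, if_pos rfl]
        simp [wd, Fin.succ_ne_zero i0]
      · rw [if_neg (fun hc => hq1 hc.2), if_neg hq1, if_neg (fun hc => hq1 hc.1)]
    · have hab : (i0.succ : Fin (n+1)) ≠ j0.succ := by
        simp [Fin.succ_inj]; exact (ne_of_lt hgt).symm
      rw [hloc_add_apply, sumA_ss, zero_add, sumB_gt ℓ hgt, projB_apply _ _ (ne_of_lt hgt)]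
      have h1 : tcf (ℓ j0) (-ℓ i0) (j0.succ, i0.succ) (i0.succ, j0.succ)
          (i0.succ, j0.succ) = -ℓ i0 := by
        simp [tcf, Prod.ext_iff, Fin.succ_inj, (ne_of_lt hgt).symm, ne_of_lt hgt]
      rw [h1]
      by_cases hq1 : q = (i0.succ, j0.succ)
      · subst hq1
        rw [h1, if_pos rfl]
        simp only [wd, if_neg hab, nu_succ]
        push_cast
        ring_nf
      · by_cases hq2 : q = (j0.succ, i0.succ)
        · subst hq2
          have h2 : tcf (ℓ j0) (-ℓ i0) (j0.succ, i0.succ) (i0.succ, j0.succ)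
              (j0.succ, i0.succ) = ℓ j0 := by
            simp [tcf, Prod.ext_iff, Fin.succ_inj, (ne_of_lt hgt).symm, ne_of_lt hgt]
          rw [h2, if_neg (fin_pair_ne (Or.inl (by
              exact fun hc => (ne_of_lt hgt) (Fin.ext hc)))),
            if_pos ⟨rfl, hab⟩]
          simp only [wo, if_neg hab, nu_succ]
          push_cast
          ring_nf
        · have h2 : tcf (ℓ j0) (-ℓ i0) (j0.succ, i0.succ) (i0.succ, j0.succ) q = 0 := by
            simp [tcf, hq1, hq2]
          rw [h2, if_neg hq1, if_neg (fun hc => hq2 hc.1)]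
          simp

/-! ### derived row/column facts for `hloc` -/

lemma hloc_diag {n : ℕ} (ℓ : Fin n → ℝ) (a b : Fin (n + 1)) :
    hloc ℓ (a, b) (a, b) = ((wd (nu ℓ) a b : ℝ) : ℂ) := by
  rw [hloc_apply, if_pos rfl]

lemma hloc_vac_row {n : ℕ} (ℓ : Fin n → ℝ) (q : Fin (n + 1) × Fin (n + 1)) :
    hloc ℓ ((0 : Fin (n + 1)), (0 : Fin (n + 1))) q = 0 := by
  rw [hloc_apply]
  split_ifs with h1 h2
  · simp [wd]
  · exact absurd rfl h2.2
  · rfl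

lemma hloc_row_abs {n : ℕ} (ℓ : Fin n → ℝ) (a b : Fin (n + 1)) :
    ∑ q ∈ Finset.univ.erase (a, b), ‖hloc ℓ (a, b) q‖ = |wo (nu ℓ) a b| := by
  by_cases hab : a = b
  · subst hab
    rw [Finset.sum_eq_zero, wo, if_pos rfl, abs_zero]
    intro q hq
    rw [hloc_apply, if_neg (Finset.ne_of_mem_erase hq),
      if_neg (fun hc => hc.2 rfl)]
    simp
  · have hmem : ((b, a) : Fin (n + 1) × Fin (n + 1)) ∈ Finset.univ.erase (a, b) := by
      refine Finset.mem_erase.2 ⟨?_, Finset.mem_univ _⟩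
      simp only [ne_eq, Prod.mk.injEq, not_and]
      intro h1; exact absurd h1.symm hab
    rw [Finset.sum_eq_single_of_mem _ hmem]
    · rw [hloc_apply, if_neg (Finset.ne_of_mem_erase hmem), if_pos ⟨rfl, hab⟩]
      rw [Complex.norm_real, Real.norm_eq_abs, abs_neg]
    · intro q hq hqba
      rw [hloc_apply, if_neg (Finset.ne_of_mem_erase hq), if_neg (fun hc => hqba hc.1)]
      simp

lemma hloc_col_diagstate {n : ℕ} (ℓ : Fin n → ℝ) (s : Fin n) (q : Fin (n + 1) × Fin (n + 1)) :
    hloc ℓ q (s.succ, s.succ) = if q = (s.succ, s.succ) then 1 else 0 := by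
  obtain ⟨a, b⟩ := q
  rw [hloc_apply]
  by_cases h1 : ((s.succ : Fin (n+1)), s.succ) = (a, b)
  · rw [Prod.mk.injEq] at h1
    obtain ⟨h1a, h1b⟩ := h1
    subst h1a; subst h1b
    rw [if_pos rfl, if_pos rfl]
    simp [wd, Fin.succ_ne_zero s]
  · rw [if_neg h1, if_neg, if_neg]
    · intro hc
      rw [Prod.mk.injEq] at hc
      exact h1 (by rw [Prod.mk.injEq]; exact ⟨hc.1.symm, hc.2.symm⟩)
    · rintro ⟨hc, hne⟩
      rw [Prod.mk.injEq] at hc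
      exact hne (hc.2.symm.trans hc.1)

/-! ### the embedded two-site operator -/

lemma embed_apply {n : ℕ} {V : Type*} [Fintype V] [DecidableEq V] (x y : V)
    (h2 : Matrix (Fin (n + 1) × Fin (n + 1)) (Fin (n + 1) × Fin (n + 1)) ℂ)
    (σ τ : V → Fin (n + 1)) :
    embed x y h2 σ τ =
      if ∀ z, z ≠ x → z ≠ y → σ z = τ z then h2 (σ x, σ y) (τ x, τ y) else 0 := rfl

lemma embed_diag {n : ℕ} {V : Type*} [Fintype V] [DecidableEq V] (x y : V)
    (h2 : Matrix (Fin (n + 1) × Fin (n + 1)) (Fin (n + 1) × Fin (n + 1)) ℂ)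
    (σ : V → Fin (n + 1)) :
    embed x y h2 σ σ = h2 (σ x, σ y) (σ x, σ y) := by
  rw [embed_apply, if_pos (fun z _ _ => rfl)]

lemma embed_row_abs {n : ℕ} {V : Type*} [Fintype V] [DecidableEq V] {x y : V} (hxy : x ≠ y)
    (h2 : Matrix (Fin (n + 1) × Fin (n + 1)) (Fin (n + 1) × Fin (n + 1)) ℂ)
    (σ : V → Fin (n + 1)) :
    ∑ τ ∈ Finset.univ.erase σ, ‖embed x y h2 σ τ‖
      = ∑ q ∈ Finset.univ.erase (σ x, σ y), ‖h2 (σ x, σ y) q‖ := by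
  classical
  rw [← Finset.sum_filter_of_ne
    (p := fun τ : V → Fin (n + 1) => ∀ z, z ≠ x → z ≠ y → σ z = τ z)
    (fun τ _ hne => by
      by_contra hp
      rw [embed_apply, if_neg hp] at hne
      simp at hne)]
  refine Finset.sum_nbij' (fun τ => (τ x, τ y))
    (fun q => Function.update (Function.update σ x q.1) y q.2) ?_ ?_ ?_ ?_ ?_
  · intro τ hτ
    rw [Finset.mem_filter, Finset.mem_erase] at hτ
    obtain ⟨⟨hne, -⟩, hp⟩ := hτ
    refine Finset.mem_erase.2 ⟨?_, Finset.mem_univ _⟩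
    intro hc
    rw [Prod.mk.injEq] at hc
    refine hne (funext fun z => ?_)
    by_cases hzx : z = x
    · subst hzx; exact hc.1
    · by_cases hzy : z = y
      · subst hzy; exact hc.2
      · exact (hp z hzx hzy).symm
  · intro q hq
    rw [Finset.mem_erase] at hq
    refine Finset.mem_filter.2 ⟨Finset.mem_erase.2 ⟨?_, Finset.mem_univ _⟩, ?_⟩
    · intro hc
      apply hq.1
      have hx : Function.update (Function.update σ x q.1) y q.2 x = q.1 := by
        rw [Function.update_of_ne hxy, Function.update_self]
      have hy : Function.update (Function.update σ x q.1) y q.2 y = q.2 := by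
        rw [Function.update_self]
      have : q = (Function.update (Function.update σ x q.1) y q.2 x,
          Function.update (Function.update σ x q.1) y q.2 y) := by
        rw [hx, hy]
      rw [this, hc]
    · intro z hzx hzy
      rw [Function.update_of_ne hzy, Function.update_of_ne hzx]
  · intro τ hτ
    dsimp only
    rw [Finset.mem_filter] at hτ
    funext z
    by_cases hzy : z = y
    · subst hzy; rw [Function.update_self]
    · rw [Function.update_of_ne hzy]
      by_cases hzx : z = x
      · subst hzx; rw [Function.update_self]
      · rw [Function.update_of_ne hzx]
        exact hτ.2 z hzx hzy
  · intro q _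
    have hx : Function.update (Function.update σ x q.1) y q.2 x = q.1 := by
      rw [Function.update_of_ne hxy, Function.update_self]
    have hy : Function.update (Function.update σ x q.1) y q.2 y = q.2 := by
      rw [Function.update_self]
    rw [hx, hy]
  · intro τ hτ
    rw [Finset.mem_filter] at hτ
    rw [embed_apply, if_pos hτ.2]

/-! ### real arithmetic estimates -/

noncomputable def Fpot (δ : ℝ) {n : ℕ} (a : Fin (n + 1)) : ℝ := 4 * δ * ((a : ℕ) : ℝ)

noncomputable def rr {n : ℕ} (ν : Fin (n + 1) → ℝ) (δ : ℝ) (a b : Fin (n + 1)) : ℝ :=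
  wd ν a b - wo ν a b - (Fpot δ b - Fpot δ a)

section RealEst

variable {n : ℕ} {δ : ℝ} {ν : Fin (n + 1) → ℝ}

lemma delta_le_one (hδ0 : 0 < δ) (hδ1 : δ ≤ 1 / (100 * ((n : ℝ) + 1))) : δ ≤ 1 := by
  have hn : (0:ℝ) ≤ (n : ℝ) := Nat.cast_nonneg n
  have h : 1 / (100 * ((n : ℝ) + 1)) ≤ 1 := by
    rw [div_le_one (by positivity)]
    nlinarith
  linarith

lemma nu_pos (hδ0 : 0 < δ)
    (hν : ∀ a : Fin (n + 1), δ ^ (a : ℕ) / 2 ≤ ν a ∧ ν a ≤ 2 * δ ^ (a : ℕ)) (a : Fin (n + 1)) :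
    0 < ν a :=
  lt_of_lt_of_le (by positivity) (hν a).1

lemma nu_ratio (hδ0 : 0 < δ) (hδ1 : δ ≤ 1 / (100 * ((n : ℝ) + 1)))
    (hν : ∀ a : Fin (n + 1), δ ^ (a : ℕ) / 2 ≤ ν a ∧ ν a ≤ 2 * δ ^ (a : ℕ))
    {a b : Fin (n + 1)} (hab : (a : ℕ) < (b : ℕ)) : ν b ≤ 4 * δ * ν a := by
  have h1 : ν b ≤ 2 * δ ^ (b : ℕ) := (hν b).2
  have h2 : δ ^ (b : ℕ) ≤ δ ^ ((a : ℕ) + 1) :=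
    pow_le_pow_of_le_one hδ0.le (delta_le_one hδ0 hδ1) hab
  have h3 : δ ^ (a : ℕ) / 2 ≤ ν a := (hν a).1
  have h4 : δ ^ ((a : ℕ) + 1) = δ ^ (a : ℕ) * δ := pow_succ δ (a : ℕ)
  nlinarith [pow_pos hδ0 (a : ℕ), pow_pos hδ0 (b : ℕ)]

lemma prod_le (hδ0 : 0 < δ) (hδ1 : δ ≤ 1 / (100 * ((n : ℝ) + 1)))
    (hν : ∀ a : Fin (n + 1), δ ^ (a : ℕ) / 2 ≤ ν a ∧ ν a ≤ 2 * δ ^ (a : ℕ))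
    {a b : Fin (n + 1)} (hab : a ≠ b) : ν a * ν b ≤ 4 * δ * (ν a ^ 2 + ν b ^ 2) := by
  have hval : (a : ℕ) ≠ (b : ℕ) := fun h => hab (Fin.ext h)
  have hpa := nu_pos hδ0 hν a
  have hpb := nu_pos hδ0 hν b
  rcases lt_or_gt_of_ne hval with h | h
  · have := nu_ratio hδ0 hδ1 hν h
    nlinarith
  · have := nu_ratio hδ0 hδ1 hν h
    nlinarith

lemma wo_le (hδ0 : 0 < δ) (hδ1 : δ ≤ 1 / (100 * ((n : ℝ) + 1)))
    (hν : ∀ a : Fin (n + 1), δ ^ (a : ℕ) / 2 ≤ ν a ∧ ν a ≤ 2 * δ ^ (a : ℕ))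
    (a b : Fin (n + 1)) : wo ν a b ≤ 4 * δ := by
  by_cases hab : a = b
  · rw [wo, if_pos hab]; positivity
  · rw [wo, if_neg hab]
    have hpa := nu_pos hδ0 hν a
    have hpb := nu_pos hδ0 hν b
    rw [div_le_iff₀ (by positivity)]
    exact prod_le hδ0 hδ1 hν hab

lemma wo_nonneg (hδ0 : 0 < δ)
    (hν : ∀ a : Fin (n + 1), δ ^ (a : ℕ) / 2 ≤ ν a ∧ ν a ≤ 2 * δ ^ (a : ℕ))
    (a b : Fin (n + 1)) : 0 ≤ wo ν a b := by
  rw [wo]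
  split_ifs
  · exact le_refl 0
  · have hpa := nu_pos hδ0 hν a
    have hpb := nu_pos hδ0 hν b
    positivity

lemma wd_nonneg (a b : Fin (n + 1)) : 0 ≤ wd ν a b := by
  rw [wd]
  split_ifs
  · exact le_refl 0
  · exact zero_le_one
  · positivity

lemma updiff (hδ0 : 0 < δ) (hδ1 : δ ≤ 1 / (100 * ((n : ℝ) + 1)))
    (hν : ∀ a : Fin (n + 1), δ ^ (a : ℕ) / 2 ≤ ν a ∧ ν a ≤ 2 * δ ^ (a : ℕ))
    {a b : Fin (n + 1)} (hab : (a : ℕ) < (b : ℕ)) :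
    (1 - 4 * δ) / 2 ≤ wd ν a b - wo ν a b := by
  have hne : a ≠ b := fun h => (Nat.lt_irrefl _ (h ▸ hab))
  have hpa := nu_pos hδ0 hν a
  have hpb := nu_pos hδ0 hν b
  have hr : ν b ≤ 4 * δ * ν a := nu_ratio hδ0 hδ1 hν hab
  have h4δ : 4 * δ ≤ 1 := by
    have hn : (0:ℝ) ≤ (n : ℝ) := Nat.cast_nonneg n
    have := delta_le_one hδ0 hδ1
    have h : δ * (100 * ((n : ℝ) + 1)) ≤ 1 := by
      rw [← le_div_iff₀ (by positivity)]; exact hδ1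
    nlinarith
  rw [wd, wo, if_neg hne, if_neg hne, div_sub_div_same, le_div_iff₀ (by positivity)]
  nlinarith [sq_nonneg (ν a - ν b), sq_nonneg (1 - 4 * δ), mul_pos hpa hpb,
    mul_le_mul_of_nonneg_left hr hpa.le, sq_nonneg (ν b)]

lemma rr_ge (hδ0 : 0 < δ) (hδ1 : δ ≤ 1 / (100 * ((n : ℝ) + 1)))
    (hν : ∀ a : Fin (n + 1), δ ^ (a : ℕ) / 2 ≤ ν a ∧ ν a ≤ 2 * δ ^ (a : ℕ))
    {a b : Fin (n + 1)} (hab : a ≤ b) (hb : b ≠ 0) : 1 / 4 ≤ rr ν δ a b := by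
  rcases eq_or_lt_of_le hab with rfl | hlt
  · rw [rr, wd, wo, if_pos rfl, if_pos rfl, if_neg hb]
    simp only [sub_self, sub_zero]
    norm_num
  · have hval : (a : ℕ) < (b : ℕ) := hlt
    have hup := updiff hδ0 hδ1 hν hval
    have hbn : ((b : ℕ) : ℝ) ≤ (n : ℝ) := by exact_mod_cast Fin.is_le b
    have han : (0:ℝ) ≤ ((a : ℕ) : ℝ) := Nat.cast_nonneg _
    have h100 : δ * (100 * ((n : ℝ) + 1)) ≤ 1 := by
      rw [← le_div_iff₀ (by positivity)]; exact hδ1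
    have hn : (0:ℝ) ≤ (n : ℝ) := Nat.cast_nonneg n
    rw [rr, Fpot, Fpot]
    nlinarith

lemma rr_nonneg (hδ0 : 0 < δ) (hδ1 : δ ≤ 1 / (100 * ((n : ℝ) + 1)))
    (hν : ∀ a : Fin (n + 1), δ ^ (a : ℕ) / 2 ≤ ν a ∧ ν a ≤ 2 * δ ^ (a : ℕ))
    (a b : Fin (n + 1)) : 0 ≤ rr ν δ a b := by
  rcases lt_trichotomy a b with hlt | rfl | hgt
  · have hb : b ≠ 0 := by
      intro hb0
      subst hb0
      exact absurd hlt (by simp [Fin.lt_iff_val_lt_val])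
    linarith [rr_ge hδ0 hδ1 hν hlt.le hb]
  · rw [rr, wo, if_pos rfl, Fpot]
    simp only [sub_self, sub_zero]
    exact wd_nonneg a a
  · have hval : ((b : ℕ) : ℝ) + 1 ≤ ((a : ℕ) : ℝ) := by
      have : (b : ℕ) < (a : ℕ) := hgt
      exact_mod_cast this
    have hwo := wo_le hδ0 hδ1 hν a b
    have hwd := wd_nonneg (ν := ν) a b
    rw [rr, Fpot, Fpot]
    nlinarith
end RealEst

/-! ### the torus Hamiltonian -/

section Torus

variable {n d N : ℕ} [NeZero N]

lemma nbrT_ne (hN : (1 : ZMod N) ≠ 0) (x : Fin d → ZMod N) (k : Fin d) : x ≠ nbrT x k := by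
  intro h
  have h2 := congrFun h k
  rw [nbrT, if_pos rfl] at h2
  exact hN (by linear_combination -h2)

lemma nbrT_bijective (k : Fin d) : Function.Bijective (fun x : Fin d → ZMod N => nbrT x k) := by
  rw [Function.bijective_iff_has_inverse]
  refine ⟨fun x j => if j = k then x j - 1 else x j, fun x => ?_, fun x => ?_⟩ <;>
    · funext j
      by_cases hj : j = k <;> simp [nbrT, hj]

/-- the per-direction coefficient vector -/
lemma nu_bounds {δ : ℝ} (lam : Fin n → Fin d → ℝ)
    (hlam : ∀ (i : Fin n) (k : Fin d),
      1 / 2 * δ ^ ((i : ℕ) + 1) ≤ lam i k ∧ lam i k ≤ 2 * δ ^ ((i : ℕ) + 1)) (k : Fin d) :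
    ∀ a : Fin (n + 1), δ ^ (a : ℕ) / 2 ≤ nu (fun i => lam i k) a ∧
      nu (fun i => lam i k) a ≤ 2 * δ ^ (a : ℕ) := by
  intro a
  rcases Fin.eq_zero_or_eq_succ a with rfl | ⟨i, rfl⟩
  · simp only [nu_zero, Fin.val_zero, pow_zero]
    norm_num
  · rw [nu_succ, Fin.val_succ]
    constructor
    · linarith [(hlam i k).1]
    · exact (hlam i k).2

lemma HL_diag (lam : Fin n → Fin d → ℝ) (σ : (Fin d → ZMod N) → Fin (n + 1)) :
    HL n d N lam σ σ = ((∑ e : (Fin d → ZMod N) × Fin d,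
      wd (nu fun i => lam i e.2) (σ e.1) (σ (nbrT e.1 e.2)) : ℝ) : ℂ) := by
  rw [HL, Matrix.sum_apply, Complex.ofReal_sum]
  refine Finset.sum_congr rfl fun e _ => ?_
  rw [hedge, embed_diag, hloc_diag]

lemma HL_vac_row (lam : Fin n → Fin d → ℝ) (τ : (Fin d → ZMod N) → Fin (n + 1)) :
    HL n d N lam (fun _ => 0) τ = 0 := by
  rw [HL, Matrix.sum_apply]
  refine Finset.sum_eq_zero fun e _ => ?_
  rw [hedge, embed_apply]
  split_ifs
  · exact hloc_vac_row _ _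
  · rfl

lemma HL_row_abs (hN : (1 : ZMod N) ≠ 0) {δ : ℝ} (hδ0 : 0 < δ)
    (hδ1 : δ ≤ 1 / (100 * ((n : ℝ) + 1)))
    (lam : Fin n → Fin d → ℝ)
    (hlam : ∀ (i : Fin n) (k : Fin d),
      1 / 2 * δ ^ ((i : ℕ) + 1) ≤ lam i k ∧ lam i k ≤ 2 * δ ^ ((i : ℕ) + 1))
    (σ : (Fin d → ZMod N) → Fin (n + 1)) :
    ∑ τ ∈ Finset.univ.erase σ, ‖HL n d N lam σ τ‖
      ≤ ∑ e : (Fin d → ZMod N) × Fin d,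
          wo (nu fun i => lam i e.2) (σ e.1) (σ (nbrT e.1 e.2)) := by
  have step1 : ∑ τ ∈ Finset.univ.erase σ, ‖HL n d N lam σ τ‖
      ≤ ∑ τ ∈ Finset.univ.erase σ, ∑ e : (Fin d → ZMod N) × Fin d,
          ‖hedge lam e σ τ‖ := by
    refine Finset.sum_le_sum fun τ _ => ?_
    rw [HL, Matrix.sum_apply]
    exact norm_sum_le _ _
  refine step1.trans ?_
  rw [Finset.sum_comm]
  refine Finset.sum_le_sum fun e _ => ?_
  rw [hedge, embed_row_abs (nbrT_ne hN e.1 e.2) _ σ, hloc_row_abs]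
  rw [abs_of_nonneg (wo_nonneg hδ0 (nu_bounds lam hlam e.2) _ _)]

lemma HL_row_gap (hN : (1 : ZMod N) ≠ 0) (hd : 1 ≤ d) {δ : ℝ} (hδ0 : 0 < δ)
    (hδ1 : δ ≤ 1 / (100 * ((n : ℝ) + 1)))
    (lam : Fin n → Fin d → ℝ)
    (hlam : ∀ (i : Fin n) (k : Fin d),
      1 / 2 * δ ^ ((i : ℕ) + 1) ≤ lam i k ∧ lam i k ≤ 2 * δ ^ ((i : ℕ) + 1))
    (σ : (Fin d → ZMod N) → Fin (n + 1)) (hσ : σ ≠ fun _ => 0) :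
    1 / 4 ≤ ∑ e : (Fin d → ZMod N) × Fin d,
        wd (nu fun i => lam i e.2) (σ e.1) (σ (nbrT e.1 e.2))
      - ∑ e : (Fin d → ZMod N) × Fin d,
        wo (nu fun i => lam i e.2) (σ e.1) (σ (nbrT e.1 e.2)) := by
  have hsplit : ∑ e : (Fin d → ZMod N) × Fin d,
        wd (nu fun i => lam i e.2) (σ e.1) (σ (nbrT e.1 e.2))
      - ∑ e : (Fin d → ZMod N) × Fin d,
        wo (nu fun i => lam i e.2) (σ e.1) (σ (nbrT e.1 e.2))
      = ∑ e : (Fin d → ZMod N) × Fin d,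
          rr (nu fun i => lam i e.2) δ (σ e.1) (σ (nbrT e.1 e.2))
        + ∑ e : (Fin d → ZMod N) × Fin d,
          (Fpot δ (σ (nbrT e.1 e.2)) - Fpot δ (σ e.1)) := by
    rw [← Finset.sum_sub_distrib, ← Finset.sum_add_distrib]
    refine Finset.sum_congr rfl fun e _ => ?_
    rw [rr]
    ring
  have htel : ∑ e : (Fin d → ZMod N) × Fin d,
      (Fpot δ (σ (nbrT e.1 e.2)) - Fpot δ (σ e.1)) = 0 := by
    rw [Fintype.sum_prod_type, Finset.sum_comm]
    refine Finset.sum_eq_zero fun k _ => ?_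
    rw [Finset.sum_sub_distrib]
    rw [Fintype.sum_bijective (fun x : Fin d → ZMod N => nbrT x k) (nbrT_bijective k)
      (fun x => Fpot δ (σ (nbrT x k))) (fun x => Fpot δ (σ x)) (fun x => rfl)]
    exact sub_self _
  rw [hsplit, htel, add_zero]
  -- find a good edge
  obtain ⟨x0, hx0⟩ := Function.ne_iff.mp hσ
  obtain ⟨xs, -, hxs⟩ := Finset.exists_max_image Finset.univ σ ⟨x0, Finset.mem_univ _⟩
  set k0 : Fin d := ⟨0, hd⟩
  set z : Fin d → ZMod N := fun j => if j = k0 then xs j - 1 else xs j with hz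
  have hnbr : nbrT z k0 = xs := by
    funext j
    by_cases hj : j = k0 <;> simp [nbrT, hz, hj]
  have hb : σ xs ≠ 0 := by
    intro h0
    exact hx0 (Fin.le_zero_iff.mp (h0 ▸ hxs x0 (Finset.mem_univ _)))
  have hkey : 1 / 4 ≤ rr (nu fun i => lam i k0) δ (σ z) (σ (nbrT z k0)) := by
    rw [hnbr]
    exact rr_ge hδ0 hδ1 (nu_bounds lam hlam k0) (hxs z (Finset.mem_univ _)) hb
  calc (1:ℝ)/4 ≤ rr (nu fun i => lam i k0) δ (σ z) (σ (nbrT z k0)) := hkey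
    _ ≤ ∑ e : (Fin d → ZMod N) × Fin d,
          rr (nu fun i => lam i e.2) δ (σ e.1) (σ (nbrT e.1 e.2)) := by
        exact Finset.single_le_sum
          (f := fun e : (Fin d → ZMod N) × Fin d =>
            rr (nu fun i => lam i e.2) δ (σ e.1) (σ (nbrT e.1 e.2)))
          (fun e _ => rr_nonneg hδ0 hδ1 (nu_bounds lam hlam e.2) _ _)
          (Finset.mem_univ ((z, k0) : (Fin d → ZMod N) × Fin d))

end Torus

section Spectral

variable {n d N : ℕ} [NeZero N]

/-- every positive real spectral value of `HL` is at least `1/4`. -/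
lemma HL_spec_lower (hN : (1 : ZMod N) ≠ 0) (hd : 1 ≤ d) {δ : ℝ} (hδ0 : 0 < δ)
    (hδ1 : δ ≤ 1 / (100 * ((n : ℝ) + 1)))
    (lam : Fin n → Fin d → ℝ)
    (hlam : ∀ (i : Fin n) (k : Fin d),
      1 / 2 * δ ^ ((i : ℕ) + 1) ≤ lam i k ∧ lam i k ≤ 2 * δ ^ ((i : ℕ) + 1))
    {γ : ℝ} (hγpos : 0 < γ) (hγ : (γ : ℂ) ∈ spectrum ℂ (HL n d N lam)) :
    1 / 4 ≤ γ := by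
  classical
  set H := HL n d N lam with hH
  -- extract an eigenvector
  have hdet : ((γ : ℂ) • (1 : Matrix _ _ ℂ) - H).det = 0 := by
    by_contra hne
    refine spectrum.mem_iff.mp hγ ?_
    rw [Algebra.algebraMap_eq_smul_one]
    rw [Matrix.isUnit_iff_isUnit_det]
    exact isUnit_iff_ne_zero.mpr hne
  obtain ⟨v, hv0, hveq⟩ := Matrix.exists_mulVec_eq_zero_iff.mpr hdet
  have hmul : H *ᵥ v = (γ : ℂ) • v := by
    rw [Matrix.sub_mulVec, Matrix.smul_mulVec, Matrix.one_mulVec, sub_eq_zero] at hveq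
    exact hveq.symm
  -- pick a maximizing configuration
  obtain ⟨σs, -, hσs⟩ := Finset.exists_max_image Finset.univ (fun σ => ‖v σ‖)
    ⟨Classical.arbitrary _, Finset.mem_univ _⟩
  have hvσ : v σs ≠ 0 := by
    intro h0
    apply hv0
    funext τ
    have := hσs τ (Finset.mem_univ _)
    rw [h0] at this
    simp only [norm_zero] at this
    exact norm_eq_zero.mp (le_antisymm this (norm_nonneg _))
  have hrow := congrFun hmul σs
  rw [Matrix.mulVec, dotProduct] at hrow
  by_cases hvac : σs = fun _ => (0 : Fin (n + 1))
  · exfalso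
    rw [hvac] at hrow
    rw [Finset.sum_eq_zero (fun τ _ => by rw [hH, HL_vac_row, zero_mul])] at hrow
    have : (γ : ℂ) * v σs = 0 := by
      simp only [Pi.smul_apply, smul_eq_mul] at hrow
      rw [← hvac] at hrow
      exact hrow.symm
    rcases mul_eq_zero.mp this with h | h
    · exact (Complex.ofReal_ne_zero.mpr hγpos.ne') h
    · exact hvσ h
  · -- main Gershgorin estimate
    have hsum : (γ : ℂ) * v σs - H σs σs * v σs = ∑ τ ∈ Finset.univ.erase σs, H σs τ * v τ := by
      rw [← Finset.sum_erase_add Finset.univ _ (Finset.mem_univ σs)] at hrow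
      simp only [Pi.smul_apply, smul_eq_mul] at hrow
      linear_combination -hrow
    have habs : ‖(γ : ℂ) - H σs σs‖ * ‖v σs‖
        ≤ (∑ τ ∈ Finset.univ.erase σs, ‖H σs τ‖) * ‖v σs‖ := by
      rw [← norm_mul, sub_mul, hsum]
      calc ‖∑ τ ∈ Finset.univ.erase σs, H σs τ * v τ‖
          ≤ ∑ τ ∈ Finset.univ.erase σs, ‖H σs τ * v τ‖ :=
            norm_sum_le _ _
        _ ≤ ∑ τ ∈ Finset.univ.erase σs, ‖H σs τ‖ * ‖v σs‖ := by
            refine Finset.sum_le_sum fun τ _ => ?_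
            rw [norm_mul]
            exact mul_le_mul_of_nonneg_left (hσs τ (Finset.mem_univ _)) (norm_nonneg _)
        _ = (∑ τ ∈ Finset.univ.erase σs, ‖H σs τ‖) * ‖v σs‖ := by
            rw [Finset.sum_mul]
    have habs2 : ‖(γ : ℂ) - H σs σs‖
        ≤ ∑ τ ∈ Finset.univ.erase σs, ‖H σs τ‖ :=
      le_of_mul_le_mul_right (by simpa using habs) (norm_pos_iff.mpr hvσ)
    set WD := ∑ e : (Fin d → ZMod N) × Fin d,
      wd (nu fun i => lam i e.2) (σs e.1) (σs (nbrT e.1 e.2)) with hWD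
    set WO := ∑ e : (Fin d → ZMod N) × Fin d,
      wo (nu fun i => lam i e.2) (σs e.1) (σs (nbrT e.1 e.2)) with hWO
    have hdiag : H σs σs = ((WD : ℝ) : ℂ) := HL_diag lam σs
    have hreal : ‖(γ : ℂ) - H σs σs‖ = |γ - WD| := by
      rw [hdiag, ← Complex.ofReal_sub, Complex.norm_real, Real.norm_eq_abs]
    have hR := HL_row_abs hN hδ0 hδ1 lam hlam σs
    have hgap := HL_row_gap hN hd hδ0 hδ1 lam hlam σs hvac
    rw [hreal] at habs2
    have : |γ - WD| ≤ WO := le_trans habs2 hR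
    have h1 : γ - WD ≥ -(WO) := by
      have := neg_abs_le (γ - WD)
      linarith
    linarith [hgap]

/-- the constant configuration `species 1` is an eigenvector with positive eigenvalue -/
lemma HL_top_mem (hn : 0 < n) (lam : Fin n → Fin d → ℝ) :
    ((Fintype.card ((Fin d → ZMod N) × Fin d) : ℝ) : ℂ) ∈ spectrum ℂ (HL n d N lam) := by
  classical
  set s : Fin (n + 1) := (⟨0, hn⟩ : Fin n).succ with hs
  set c : (Fin d → ZMod N) → Fin (n + 1) := fun _ => s with hc
  set E : ℂ := ((Fintype.card ((Fin d → ZMod N) × Fin d) : ℝ) : ℂ) with hE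
  have hcol : ∀ τ, HL n d N lam τ c = if τ = c then E else 0 := by
    intro τ
    rw [HL, Matrix.sum_apply]
    have hterm : ∀ e : (Fin d → ZMod N) × Fin d,
        hedge lam e τ c = if τ = c then 1 else 0 := by
      intro e
      rw [hedge, embed_apply]
      have hcc : (c e.1, c (nbrT e.1 e.2)) = (s, s) := rfl
      rw [hcc, hloc_col_diagstate]
      by_cases hτ : τ = c
      · subst hτ
        rw [if_pos (fun z _ _ => rfl), if_pos rfl, if_pos rfl]
      · rw [if_neg hτ]
        split_ifs with h1 h2
        · exfalso
          apply hτ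
          funext z
          by_cases hz1 : z = e.1
          · subst hz1
            have := congrArg Prod.fst h2
            exact this
          · by_cases hz2 : z = nbrT e.1 e.2
            · subst hz2
              have := congrArg Prod.snd h2
              exact this
            · exact h1 z hz1 hz2
        · rfl
        · rfl
    rw [Finset.sum_congr rfl fun e _ => hterm e]
    by_cases hτ : τ = c
    · rw [if_pos hτ, if_pos hτ, Finset.sum_const, Finset.card_univ, nsmul_eq_mul, mul_one, hE]
      push_cast
      ring
    · rw [if_neg hτ, if_neg hτ, Finset.sum_const_zero]
  have hmul : HL n d N lam *ᵥ bvec c = E • bvec c := by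
    funext τ
    rw [Matrix.mulVec, dotProduct]
    have : ∀ σ', HL n d N lam τ σ' * bvec c σ'
        = if σ' = c then HL n d N lam τ c else 0 := by
      intro σ'
      rw [bvec]
      by_cases h : σ' = c <;> simp [h]
    rw [Finset.sum_congr rfl fun σ' _ => this σ', Finset.sum_ite_eq' Finset.univ c]
    rw [if_pos (Finset.mem_univ _), hcol τ, Pi.smul_apply, bvec, smul_eq_mul]
    by_cases hτ : τ = c <;> simp [hτ]
  refine spectrum.mem_iff.mpr ?_
  rw [Algebra.algebraMap_eq_smul_one, Matrix.isUnit_iff_isUnit_det]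
  rw [isUnit_iff_ne_zero, ne_eq, not_not]
  refine Matrix.exists_mulVec_eq_zero_iff.mp ⟨bvec c, ?_, ?_⟩
  · intro h0
    have := congrFun h0 c
    rw [bvec] at this
    simp at this
  · rw [Matrix.sub_mulVec, Matrix.smul_mulVec, Matrix.one_mulVec, hmul, sub_self]

end Spectral

/-- **Theorem (Spectral gap).** Fix integers `d ≥ 2` and `n ≥ 1`. There exists a constant
`c_{d,n} > 0` such that for all `0 < δ < c_{d,n}`: if the anisotropy parameters satisfy
`(1/2)δ^i ≤ λ_i^{(k)} ≤ 2δ^i` for all `1 ≤ i ≤ n`, `1 ≤ k ≤ d`, then `H_L` is gapped,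
i.e. `inf_{L ≥ 2} γ_L > 0`. -/
theorem pvbs_spectral_gap (d n : ℕ) (hd : 2 ≤ d) (hn : 1 ≤ n) :
    ∃ c : ℝ, 0 < c ∧
      ∀ δ : ℝ, 0 < δ → δ < c →
        ∀ lam : Fin n → Fin d → ℝ,
          (∀ (i : Fin n) (k : Fin d),
              1 / 2 * δ ^ ((i : ℕ) + 1) ≤ lam i k ∧ lam i k ≤ 2 * δ ^ ((i : ℕ) + 1)) →
          ∃ g : ℝ, 0 < g ∧
            ∀ (L : ℕ) [NeZero (2 * L)], 2 ≤ L → g ≤ gap (HL n d (2 * L) lam) := by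
  refine ⟨1 / (100 * ((n : ℝ) + 1)), by positivity, ?_⟩
  intro δ hδ0 hδc lam hlam
  refine ⟨1 / 4, by norm_num, ?_⟩
  intro L _ hL
  haveI : Fact (1 < 2 * L) := ⟨by omega⟩
  have hN1 : (1 : ZMod (2 * L)) ≠ 0 := one_ne_zero
  have hδ1 : δ ≤ 1 / (100 * ((n : ℝ) + 1)) := le_of_lt hδc
  haveI : Nonempty (Fin d) := ⟨⟨0, by omega⟩⟩
  rw [gap]
  refine le_csInf ⟨(Fintype.card ((Fin d → ZMod (2 * L)) × Fin d) : ℝ), ?_, ?_⟩ ?_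
  · exact_mod_cast Fintype.card_pos
  · exact HL_top_mem (by omega : 0 < n) lam
  · rintro γ ⟨hγpos, hγmem⟩
    exact HL_spec_lower hN1 (by omega) hδ0 hδ1 lam hlam hγpos hγmem


end PVBS
end

section
/- (Ground states of the reference box-on-a-stick Hamiltonian.) Let b = |i_0 ⊗ i_1 ⊗ … ⊗ i_n ⊗ j⟩ be a product basis vector of ⊗_{x∈C_m} ℂ^{n+1}, where i_l ∈ {0,…,n} is the label at site l·e_1 along the stick and j ∈ {0,…,n}^{|B_m|−1} records the labels at the remaining sites of the box B_m. Then b ∈ ker H̃_{C_m} if and only if j is identically 0 and the sequence (i_0, i_1, …, i_n) is strictly decreasing until it reaches 0 and remains 0 thereafter. -/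
open scoped BigOperators ComplexOrder Matrix

namespace PVBS

/-! ### Auxiliary lemmas -/

section Aux

lemma projOnto_ketPair {n : ℕ} (a b : Fin (n+1)) (r s) :
    projOnto (ketPair a b) r s = if r = (a,b) ∧ s = (a,b) then 1 else 0 := by
  have h1 : (∑ p, Complex.normSq (ketPair a b p) : ℝ) = 1 := by
    simp [ketPair, apply_ite Complex.normSq]
  rw [projOnto, h1]
  simp only [Complex.ofReal_one, inv_one, one_smul, Matrix.of_apply, ketPair]
  split_ifs <;> simp_all

lemma htilde_apply_ne {n : ℕ} (p q : Fin (n+1) × Fin (n+1)) (h : p ≠ q) : htilde n p q = 0 := by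
  have h1 : ∀ a b : Fin (n+1), ¬ (p = (a,b) ∧ q = (a,b)) := by
    rintro a b ⟨rfl, rfl⟩; exact h rfl
  simp [htilde, Matrix.sum_apply, Matrix.add_apply, projOnto_ketPair, h1,
    apply_ite (fun M : Matrix (Fin (n+1) × Fin (n+1)) (Fin (n+1) × Fin (n+1)) ℂ => M p q)]

lemma htilde_apply_diag {n : ℕ} (p : Fin (n+1) × Fin (n+1)) :
    htilde n p p = if p.2 ≠ 0 ∧ p.1 ≤ p.2 then 1 else 0 := by
  obtain ⟨a, b⟩ := p
  simp only [htilde, Matrix.sum_apply, Matrix.add_apply, projOnto_ketPair,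
    apply_ite (fun M : Matrix (Fin (n+1) × Fin (n+1)) (Fin (n+1) × Fin (n+1)) ℂ => M (a,b) (a,b)),
    Matrix.zero_apply, and_self, Prod.mk.injEq]
  induction a using Fin.cases with
  | zero =>
    induction b using Fin.cases with
    | zero => simp [Fin.succ_ne_zero, (Fin.succ_ne_zero _).symm]
    | succ c =>
      simp [Fin.succ_ne_zero, (Fin.succ_ne_zero _).symm, Fin.succ_inj, eq_comm,
        Fin.zero_le, (Fin.succ_ne_zero c).symm]
  | succ a0 =>
    induction b using Fin.cases with
    | zero => simp [Fin.succ_ne_zero, (Fin.succ_ne_zero _).symm]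
    | succ b0 =>
      have : ∀ i j : Fin n,
          ((if i ≤ j then (if a0.succ = i.succ ∧ b0.succ = j.succ then (1:ℂ) else 0) else 0))
          = if i = a0 then (if j = b0 then (if a0 ≤ b0 then (1:ℂ) else 0) else 0) else 0 := by
        intro i j
        split_ifs <;> simp_all [Fin.succ_inj, eq_comm, Fin.succ_le_succ_iff]
      simp only [this, Finset.sum_ite_eq', Finset.mem_univ, if_true]
      simp [Fin.succ_ne_zero, (Fin.succ_ne_zero _).symm, Fin.succ_le_succ_iff]

lemma embed_mulVec_bvec {n : ℕ} {V : Type*} [Fintype V] [DecidableEq V] (x y : V)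
    (h2 : Matrix (Fin (n + 1) × Fin (n + 1)) (Fin (n + 1) × Fin (n + 1)) ℂ)
    (hdiag : ∀ p q, p ≠ q → h2 p q = 0) (σ : V → Fin (n+1)) :
    (embed x y h2).mulVec (bvec σ) = h2 (σ x, σ y) (σ x, σ y) • bvec σ := by
  funext τ
  simp only [Matrix.mulVec, dotProduct, bvec, mul_ite, mul_one, mul_zero,
    Finset.sum_ite_eq', Finset.mem_univ, if_true, Pi.smul_apply, smul_eq_mul]
  by_cases hts : τ = σ
  · subst hts
    simp [embed]
  · rw [if_neg hts]
    rw [embed, Matrix.of_apply]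
    split_ifs with hc
    · apply hdiag
      intro heq
      apply hts
      funext z
      by_cases hzx : z = x
      · subst hzx; exact (Prod.ext_iff.mp heq).1
      · by_cases hzy : z = y
        · subst hzy; exact (Prod.ext_iff.mp heq).2
        · exact hc z hzx hzy
    · rfl

lemma sum_mulVec' {ι I : Type*} [Fintype I] [DecidableEq I] (s : Finset ι)
    (A : ι → Matrix I I ℂ) (v : I → ℂ) :
    (∑ x ∈ s, A x) *ᵥ v = ∑ x ∈ s, A x *ᵥ v := by
  ext i
  simp only [Matrix.mulVec, dotProduct, Matrix.sum_apply, Finset.sum_mul,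
    Finset.sum_apply]
  rw [Finset.sum_comm]

lemma HtildeG_mulVec {d n : ℕ} (G : Finset (Fin d → ℤ)) (σ : {x // x ∈ G} → Fin (n+1)) :
    (HtildeG n G).mulVec (bvec σ) =
      (((∑ x : {x // x ∈ G}, ∑ k : Fin d,
        if h : nbrZ (x : Fin d → ℤ) k ∈ G then
          (if σ ⟨nbrZ (x : Fin d → ℤ) k, h⟩ ≠ 0 ∧ σ x ≤ σ ⟨nbrZ (x : Fin d → ℤ) k, h⟩
            then 1 else 0) else 0 : ℕ) : ℂ)) • bvec σ := by
  rw [HtildeG]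
  rw [sum_mulVec']
  have hterm : ∀ x : {x // x ∈ G},
      (∑ k : Fin d, if h : nbrZ (x : Fin d → ℤ) k ∈ G then
        embed x ⟨nbrZ (x : Fin d → ℤ) k, h⟩ (htilde n) else 0).mulVec (bvec σ)
      = (((∑ k : Fin d, if h : nbrZ (x : Fin d → ℤ) k ∈ G then
          (if σ ⟨nbrZ (x : Fin d → ℤ) k, h⟩ ≠ 0 ∧ σ x ≤ σ ⟨nbrZ (x : Fin d → ℤ) k, h⟩
            then 1 else 0) else 0 : ℕ) : ℂ)) • bvec σ := by
    intro x
    rw [sum_mulVec', Nat.cast_sum, Finset.sum_smul]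
    refine Finset.sum_congr rfl fun k _ => ?_
    by_cases h : nbrZ (x : Fin d → ℤ) k ∈ G
    · rw [dif_pos h, dif_pos h, embed_mulVec_bvec _ _ _ htilde_apply_ne,
        htilde_apply_diag]
      split_ifs <;> simp
    · rw [dif_neg h, dif_neg h, Matrix.zero_mulVec]
      simp
  simp only [hterm]
  rw [← Finset.sum_smul, Nat.cast_sum]

lemma kernel_iff_E {d n : ℕ} (G : Finset (Fin d → ℤ)) (σ : {x // x ∈ G} → Fin (n+1)) :
    (HtildeG n G).mulVec (bvec σ) = 0 ↔
      ∀ (x : {x // x ∈ G}) (k : Fin d) (h : nbrZ (x : Fin d → ℤ) k ∈ G),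
        σ ⟨nbrZ (x : Fin d → ℤ) k, h⟩ = 0 ∨ σ ⟨nbrZ (x : Fin d → ℤ) k, h⟩ < σ x := by
  have hbv : bvec σ ≠ 0 := by
    intro h
    have := congrFun h σ
    simp [bvec] at this
  rw [HtildeG_mulVec, smul_eq_zero]
  simp only [hbv, or_false, Nat.cast_eq_zero, Finset.sum_eq_zero_iff, Finset.mem_univ,
    true_implies]
  constructor
  · intro H x k h
    have := H x k
    rw [dif_pos h] at this
    by_cases h0 : σ ⟨nbrZ (x : Fin d → ℤ) k, h⟩ = 0
    · exact Or.inl h0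
    · right
      by_contra hlt
      rw [if_pos ⟨h0, not_lt.mp hlt⟩] at this
      exact one_ne_zero this
  · intro H x k
    by_cases h : nbrZ (x : Fin d → ℤ) k ∈ G
    · rw [dif_pos h]
      rcases H x k h with h0 | hlt
      · rw [if_neg]; rintro ⟨c1, _⟩; exact c1 h0
      · rw [if_neg]; rintro ⟨_, c2⟩; exact absurd hlt (not_lt.mpr c2)
    · rw [dif_neg h]

lemma mem_stickF {d n : ℕ} {z : Fin d → ℤ} :
    z ∈ stickF d n ↔ ∃ l, l < n ∧ z = stickPt d l := by
  simp only [stickF, Finset.mem_image, Finset.mem_range]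
  constructor
  · rintro ⟨l, hl, rfl⟩; exact ⟨l, hl, rfl⟩
  · rintro ⟨l, hl, rfl⟩; exact ⟨l, hl, rfl⟩

lemma mem_boxF {d n m : ℕ} (k0 : Fin d) (hk0 : (k0 : ℕ) = 0) (z : Fin d → ℤ) :
    z ∈ boxF d n m ↔
      ((n : ℤ) ≤ z k0 ∧ z k0 ≤ (n : ℤ) + m ∧ ∀ j, j ≠ k0 → 0 ≤ z j ∧ z j ≤ m) := by
  constructor
  · intro hz
    rw [boxF, Finset.mem_image] at hz
    obtain ⟨a, -, rfl⟩ := hz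
    have hle : ∀ j : Fin d, ((a j : ℕ) : ℤ) ≤ m := by
      intro j; exact_mod_cast Nat.cast_le.mpr (Fin.is_le (a j))
    refine ⟨?_, ?_, ?_⟩
    · simp only [hk0, if_true]; have := hle k0; omega
    · simp only [hk0, if_true]; have := hle k0; omega
    · intro j hj
      have hj' : (j : ℕ) ≠ 0 := fun h => hj (Fin.ext (by rw [h, hk0]))
      simp only [hj', if_false]
      exact ⟨Int.natCast_nonneg _, hle j⟩
  · rintro ⟨h1, h2, h3⟩
    rw [boxF, Finset.mem_image]
    refine ⟨fun j => if h : j = k0 then ⟨(z k0 - n).toNat, by omega⟩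
      else ⟨(z j).toNat, by have := h3 j h; omega⟩, Finset.mem_univ _, ?_⟩
    funext j
    by_cases hj : j = k0
    · subst hj
      simp only [hk0, if_true, dif_pos]
      omega
    · have hj' : (j : ℕ) ≠ 0 := fun h => hj (Fin.ext (by rw [h, hk0]))
      have := h3 j hj
      simp only [hj', if_false, dif_neg hj]
      omega

lemma CmF_nonneg {d n m : ℕ} {z : Fin d → ℤ} (hz : z ∈ CmF d n m) (j : Fin d) :
    0 ≤ z j := by
  rw [CmF, Finset.mem_union] at hz
  rcases hz with hz | hz
  · obtain ⟨l, -, rfl⟩ := mem_stickF.mp hz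
    unfold stickPt; split <;> omega
  · rw [boxF, Finset.mem_image] at hz
    obtain ⟨a, -, rfl⟩ := hz
    dsimp only; split <;> omega

lemma Wz_nonneg {d n m : ℕ} {z : Fin d → ℤ} (hz : z ∈ CmF d n m) : 0 ≤ ∑ j, z j :=
  Finset.sum_nonneg fun j _ => CmF_nonneg hz j

lemma Wz_box {d n m : ℕ} (k0 : Fin d) (hk0 : (k0 : ℕ) = 0) {z : Fin d → ℤ}
    (hz : z ∈ boxF d n m) : (n : ℤ) ≤ ∑ j, z j := by
  obtain ⟨h1, -, h3⟩ := (mem_boxF k0 hk0 z).mp hz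
  have : ∑ j, z j = z k0 + ∑ j ∈ Finset.univ.erase k0, z j :=
    (Finset.add_sum_erase _ _ (Finset.mem_univ k0)).symm
  have hpos : 0 ≤ ∑ j ∈ Finset.univ.erase k0, z j :=
    Finset.sum_nonneg fun j hj => (h3 j (Finset.ne_of_mem_erase hj)).1
  omega

lemma Wz_nbr {d : ℕ} (x : Fin d → ℤ) (k : Fin d) :
    ∑ j, nbrZ x k j = (∑ j, x j) + 1 := by
  unfold nbrZ
  rw [Finset.sum_congr rfl (fun j _ => by
    show (if j = k then x j + 1 else x j) = x j + if j = k then 1 else 0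
    split <;> ring)]
  rw [Finset.sum_add_distrib, Finset.sum_ite_eq' Finset.univ k (fun _ => (1:ℤ))]
  simp

lemma Wz_stickPt {d : ℕ} (hd : 0 < d) (l : ℕ) : ∑ j, stickPt d l j = l := by
  unfold stickPt
  rw [Finset.sum_congr rfl (fun j _ => by
    show _ = if j = (⟨0, hd⟩ : Fin d) then (l:ℤ) else 0
    by_cases h : j = (⟨0, hd⟩ : Fin d)
    · subst h; simp
    · have : (j:ℕ) ≠ 0 := fun hh => h (Fin.ext hh)
      simp [h, this])]
  rw [Finset.sum_ite_eq' Finset.univ _ (fun _ => (l:ℤ))]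
  simp

lemma nbrZ_stickPt {d : ℕ} (k0 : Fin d) (hk0 : (k0 : ℕ) = 0) (l : ℕ) :
    nbrZ (stickPt d l) k0 = stickPt d (l + 1) := by
  funext j
  unfold nbrZ stickPt
  by_cases hj : j = k0
  · subst hj; simp [hk0]
  · have : (j:ℕ) ≠ 0 := fun hh => hj (Fin.ext (by rw [hh, hk0]))
    simp [hj, this]

lemma stickPt_mem_CmF {d n m : ℕ} (hd : 0 < d) {l : ℕ} (hl : l ≤ n) :
    stickPt d l ∈ CmF d n m := by
  rw [CmF, Finset.mem_union]
  rcases lt_or_eq_of_le hl with hl | rfl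
  · exact Or.inl (mem_stickF.mpr ⟨l, hl, rfl⟩)
  · right
    rw [mem_boxF ⟨0, hd⟩ rfl]
    refine ⟨?_, ?_, ?_⟩
    · simp [stickPt]
    · simp [stickPt]
    · intro j hj
      have : (j:ℕ) ≠ 0 := fun hh => hj (Fin.ext hh)
      simp [stickPt, this]

lemma pred_exists {d n m : ℕ} (hd : 0 < d) (hn : 1 ≤ n) {z : Fin d → ℤ}
    (hz : z ∈ CmF d n m) (hz0 : z ≠ stickPt d 0) :
    ∃ x ∈ CmF d n m, ∃ k, nbrZ x k = z := by
  set k0 : Fin d := ⟨0, hd⟩ with hk0def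
  have hk0 : (k0 : ℕ) = 0 := rfl
  rw [CmF, Finset.mem_union] at hz
  rcases hz with hz | hz
  · obtain ⟨l, hl, rfl⟩ := mem_stickF.mp hz
    have hl0 : l ≠ 0 := fun h => hz0 (by rw [h])
    refine ⟨stickPt d (l - 1), ?_, k0, ?_⟩
    · exact stickPt_mem_CmF hd (by omega)
    · have h' : l - 1 + 1 = l := by omega
      rw [nbrZ_stickPt k0 hk0, h']
  · obtain ⟨h1, h2, h3⟩ := (mem_boxF k0 hk0 z).mp hz
    by_cases hgt : (n : ℤ) < z k0
    · refine ⟨fun j => if j = k0 then z j - 1 else z j, ?_, k0, ?_⟩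
      · rw [CmF, Finset.mem_union]; right
        rw [mem_boxF k0 hk0]
        refine ⟨?_, ?_, fun j hj => ?_⟩
        · simp only [if_pos rfl]; omega
        · simp only [if_pos rfl]; omega
        · have := h3 j hj
          simp only [if_neg hj]
          omega
      · funext j
        unfold nbrZ
        by_cases hj : j = k0 <;> simp [hj]
    · by_cases hex : ∃ j, j ≠ k0 ∧ z j ≠ 0
      · obtain ⟨j1, hj1, hzj1⟩ := hex
        have hb := h3 j1 hj1
        refine ⟨fun j => if j = j1 then z j - 1 else z j, ?_, j1, ?_⟩
        · rw [CmF, Finset.mem_union]; right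
          rw [mem_boxF k0 hk0]
          have hne : ¬ (k0 = j1) := fun h => hj1 h.symm
          refine ⟨?_, ?_, fun j hj => ?_⟩
          · simp only [if_neg hne]; omega
          · simp only [if_neg hne]; omega
          · by_cases hjj : j = j1
            · subst hjj
              simp only [if_pos rfl]
              omega
            · have := h3 j hj
              simp only [if_neg hjj]
              omega
        · funext j
          unfold nbrZ
          by_cases hj : j = j1 <;> simp [hj]
      · push_neg at hex
        have hzeq : z = stickPt d n := by
          funext j
          by_cases hj : j = k0
          · subst hj; unfold stickPt; simp [hk0]; omega
          · have : (j:ℕ) ≠ 0 := fun hh => hj (Fin.ext (by rw [hh, hk0]))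
            unfold stickPt; simp [this]; exact hex j hj
        refine ⟨stickPt d (n - 1), stickPt_mem_CmF hd (by omega), k0, ?_⟩
        have h' : n - 1 + 1 = n := by omega
        rw [nbrZ_stickPt k0 hk0, h', hzeq]

lemma key_induction {d n m : ℕ} (hd : 0 < d) (hn : 1 ≤ n)
    (σ : {x // x ∈ CmF d n m} → Fin (n+1))
    (E : ∀ (x : {x // x ∈ CmF d n m}) (k : Fin d) (h : nbrZ (x : Fin d → ℤ) k ∈ CmF d n m),
        σ ⟨nbrZ (x : Fin d → ℤ) k, h⟩ = 0 ∨ σ ⟨nbrZ (x : Fin d → ℤ) k, h⟩ < σ x) :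
    ∀ (t : ℕ) (z : {x // x ∈ CmF d n m}), (∑ j, (z : Fin d → ℤ) j).toNat = t → σ z ≠ 0 →
      ((σ z : ℕ) : ℤ) + ∑ j, (z : Fin d → ℤ) j ≤ n := by
  intro t
  induction t using Nat.strong_induction_on with
  | _ t IH =>
    intro z ht hz
    by_cases h0 : (z : Fin d → ℤ) = stickPt d 0
    · have hW : ∑ j, (z : Fin d → ℤ) j = 0 := by rw [h0, Wz_stickPt hd]; simp
      have : (σ z : ℕ) ≤ n := Fin.is_le _
      omega
    · obtain ⟨x, hx, k, hk⟩ := pred_exists hd hn z.2 h0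
      have hmem : nbrZ x k ∈ CmF d n m := by rw [hk]; exact z.2
      have hE := E ⟨x, hx⟩ k hmem
      have hz' : (⟨nbrZ x k, hmem⟩ : {x // x ∈ CmF d n m}) = z := Subtype.ext hk
      rw [hz'] at hE
      rcases hE with h | h
      · exact absurd h hz
      · have hxz : σ ⟨x, hx⟩ ≠ 0 := by
          intro hh; rw [hh] at h; exact absurd h (Fin.not_lt_zero _)
        have hWx0 : 0 ≤ ∑ j, x j := Wz_nonneg hx
        have hWrel : ∑ j, (z : Fin d → ℤ) j = (∑ j, x j) + 1 := by rw [← hk, Wz_nbr]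
        have hlt : (∑ j, x j).toNat < t := by omega
        have hIH : ((σ ⟨x, hx⟩ : ℕ) : ℤ) + ∑ j, x j ≤ n := IH _ hlt ⟨x, hx⟩ rfl hxz
        have hl : (σ z : ℕ) < ((σ ⟨x, hx⟩ : Fin (n+1)) : ℕ) := h
        omega

end Aux

/-- **Ground states of the reference box-on-a-stick Hamiltonian.** A product basis vector
`b` (labelled by a configuration `σ` of `C_m`) lies in `ker H̃_{C_m}` if and only if all
labels away from the stick `{0, e₁, …, n·e₁}` vanish and the sequence of labels
`(i_0, …, i_n)` along the stick (with `i_l` the label at `l·e₁`) is strictly decreasing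
until it reaches `0` and remains `0` thereafter. -/



theorem ground_states_reference_box_on_stick (d n m : ℕ) (hd : 2 ≤ d) (hn : 1 ≤ n)
    (hm : 4 ≤ m) (σ : {x // x ∈ CmF d n m} → Fin (n + 1)) :
    (HtildeG n (CmF d n m)).mulVec (bvec σ) = 0 ↔
      ((∀ x : {x // x ∈ CmF d n m},
          (∀ l : ℕ, l ≤ n → (x : Fin d → ℤ) ≠ stickPt d l) → σ x = 0) ∧
        ∀ (l : ℕ), l < n → ∀ (x y : {x // x ∈ CmF d n m}),
          (x : Fin d → ℤ) = stickPt d l → (y : Fin d → ℤ) = stickPt d (l + 1) →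
            ((σ y : ℕ) < (σ x : ℕ) ∨ (σ x = 0 ∧ σ y = 0))) := by
  classical
  have hd0 : 0 < d := by omega
  set k0 : Fin d := ⟨0, hd0⟩ with hk0def
  have hk0 : (k0 : ℕ) = 0 := rfl
  rw [kernel_iff_E]
  constructor
  · intro E
    refine ⟨?_, ?_⟩
    · intro x hx
      by_contra h0
      have hxbox : (x : Fin d → ℤ) ∈ boxF d n m := by
        have hmem : (x : Fin d → ℤ) ∈ stickF d n ∪ boxF d n m := x.2
        rw [Finset.mem_union] at hmem
        rcases hmem with h | h
        · obtain ⟨l, hl, he⟩ := mem_stickF.mp h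
          exact absurd he (hx l (le_of_lt hl))
        · exact h
      have h1 := key_induction hd0 hn σ E _ x rfl h0
      have h2 := Wz_box k0 hk0 hxbox
      have h3 : (σ x : ℕ) ≠ 0 := fun hh => h0 (Fin.ext (by simp [hh]))
      omega
    · intro l hl x y hxs hys
      have hcoe : nbrZ (x : Fin d → ℤ) k0 = (y : Fin d → ℤ) := by
        rw [hxs, nbrZ_stickPt k0 hk0, ← hys]
      have hmem : nbrZ (x : Fin d → ℤ) k0 ∈ CmF d n m := by rw [hcoe]; exact y.2
      have hE := E x k0 hmem
      have hy : (⟨nbrZ (x : Fin d → ℤ) k0, hmem⟩ : {x // x ∈ CmF d n m}) = y :=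
        Subtype.ext hcoe
      rw [hy] at hE
      rcases hE with hy0 | hlt
      · by_cases hx0 : σ x = 0
        · exact Or.inr ⟨hx0, hy0⟩
        · left
          have h3 : (σ x : ℕ) ≠ 0 := fun hh => hx0 (Fin.ext (by simp [hh]))
          simp only [hy0, Fin.val_zero]
          omega
      · exact Or.inl (Fin.lt_def.mp hlt)
  · rintro ⟨C1, C2⟩ x k h
    set y : {x // x ∈ CmF d n m} := ⟨nbrZ (x : Fin d → ℤ) k, h⟩ with hydef
    by_cases hys : ∀ l : ℕ, l ≤ n → (y : Fin d → ℤ) ≠ stickPt d l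
    · exact Or.inl (C1 y hys)
    · push_neg at hys
      obtain ⟨l, hl, hyeq⟩ := hys
      have hyeq' : nbrZ (x : Fin d → ℤ) k = stickPt d l := hyeq
      have hl0 : l ≠ 0 := by
        intro hh; subst hh
        have h1 := congrFun hyeq' k
        have h2 : (x : Fin d → ℤ) k + 1 = 0 := by
          simpa [nbrZ, stickPt] using h1
        have := CmF_nonneg x.2 k
        omega
      have hkk0 : k = k0 := by
        by_contra hkk
        have hk' : (k : ℕ) ≠ 0 := fun hh => hkk (Fin.ext (by rw [hh, hk0]))
        have h1 := congrFun hyeq' k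
        have h2 : (x : Fin d → ℤ) k + 1 = 0 := by
          simpa [nbrZ, stickPt, hk'] using h1
        have := CmF_nonneg x.2 k
        omega
      subst hkk0
      have hxeq : (x : Fin d → ℤ) = stickPt d (l - 1) := by
        funext j
        have h1 := congrFun hyeq' j
        by_cases hj : j = k0
        · subst hj
          have h2 : (x : Fin d → ℤ) k0 + 1 = (l : ℤ) := by
            simpa [nbrZ, stickPt, hk0] using h1
          show (x : Fin d → ℤ) k0 = stickPt d (l - 1) k0
          unfold stickPt
          simp only [hk0, if_true]
          omega
        · have hj' : (j : ℕ) ≠ 0 := fun hh => hj (Fin.ext (by rw [hh, hk0]))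
          have h2 : (x : Fin d → ℤ) j = 0 := by
            simpa [nbrZ, hj, stickPt, hj'] using h1
          unfold stickPt
          simp only [hj', if_false]
          exact h2
      have hl1 : l - 1 < n := by omega
      have hys' : (y : Fin d → ℤ) = stickPt d (l - 1 + 1) := by
        have h' : l - 1 + 1 = l := by omega
        rw [h']; exact hyeq
      rcases C2 (l - 1) hl1 x y hxeq hys' with hlt | ⟨_, hy0⟩
      · exact Or.inr (Fin.lt_def.mpr hlt)
      · exact Or.inl hy0

end PVBS
end
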